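/- arXiv:2008.02245 — 10 statements merged into one kernel-verified Lean document; each statement's English description precedes it below -/
import Mathlib

section
/- Let 𝒞 be a class of S-acts closed under arbitrary direct products. Suppose there exists an infinite cardinal ℵ such that for every C ∈ 𝒞 and every subact T of C with |T| ≤ |A| there exists a subact B of C with T ⊆ B, B ∈ 𝒞, and |B| ≤ ℵ. Then the S-act A has a 𝒞-preenvelope. -/
universe u

open Cardinal

/-- A (finite-system component) equation over an `S`-act `B` in `n` unknowns:
`xᵢ r = xᵢ s`, `xᵢ r = xⱼ s`, or `xᵢ r = a` with `a ∈ B`. -/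
inductive ActEq (S : Type u) (B : Type u) (n : ℕ) where
  | xrxs (i : Fin n) (r s : S)
  | xrys (i j : Fin n) (r s : S)
  | xra (i : Fin n) (r : S) (a : B)

/-- An assignment `v` of the unknowns satisfies an equation. -/
def SatEq {S B : Type u} [Monoid S] [MulAction S B] {n : ℕ} (v : Fin n → B) :
    ActEq S B n → Prop
  | .xrxs i r s => r • v i = s • v i
  | .xrys i j r s => r • v i = s • v j
  | .xra i r a => r • v i = a

/-- The constants of the equation lie in the subset `U`. -/
def ConstIn {S B : Type u} (U : Set B) {n : ℕ} : ActEq S B n → Prop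
  | .xra _ _ a => a ∈ U
  | _ => True

/-- `U` is a pure subset of the `S`-act `B`: every finite system of equations with
constants from `U` that is solvable in `B` is solvable in `U`. -/
def IsPure (S : Type u) {B : Type u} [Monoid S] [MulAction S B] (U : Set B) : Prop :=
  ∀ (n : ℕ) (E : List (ActEq S B n)), (∀ e ∈ E, ConstIn U e) →
    (∃ v : Fin n → B, ∀ e ∈ E, SatEq v e) →
    ∃ v : Fin n → B, (∀ i, v i ∈ U) ∧ ∀ e ∈ E, SatEq v e

/-- `φ : A → C` is a `𝒞`-preenvelope of `A`. -/
def IsPreenvelope {S : Type u} [Monoid S] (𝒞 : (C : Type u) → [MulAction S C] → Prop)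
    (A : Type u) [MulAction S A] (C : Type u) [MulAction S C] (φ : A →[S] C) : Prop :=
  𝒞 C ∧ ∀ (C' : Type u) [MulAction S C'], 𝒞 C' →
    ∀ f : A →[S] C', ∃ g : C →[S] C', ∀ a, g (φ a) = f a

/-- `A` has a `𝒞`-preenvelope. -/
def HasPreenvelope {S : Type u} [Monoid S] (𝒞 : (C : Type u) → [MulAction S C] → Prop)
    (A : Type u) [MulAction S A] : Prop :=
  ∃ (C : Type u) (inst : MulAction S C), letI := inst
    ∃ φ : A →[S] C, IsPreenvelope 𝒞 A C φ

/-- An injective `S`-act: maps into it extend along all embeddings of acts. -/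
def IsInjectiveAct (S : Type u) [Monoid S] (E : Type u) [MulAction S E] : Prop :=
  ∀ (A B : Type u) [MulAction S A] [MulAction S B] (i : A →[S] B),
    Function.Injective i → ∀ f : A →[S] E, ∃ g : B →[S] E, ∀ a, g (i a) = f a

/-- `A` is absolutely pure: it is pure in every act containing it. -/
def IsAbsolutelyPure (S : Type u) [Monoid S] (A : Type u) [MulAction S A] : Prop :=
  ∀ (B : Type u) [MulAction S B] (i : A →[S] B), Function.Injective i →
    IsPure S (Set.range i)

/-- The right ideal of `S` generated by a set `F` (in the act convention `s • t = s * t`). -/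
def genIdeal {S : Type u} [Monoid S] (F : Set S) : Set S :=
  {x | ∃ s : S, ∃ f ∈ F, x = s * f}

theorem genIdeal_smul {S : Type u} [Monoid S] (F : Set S) (s : S) {x : S}
    (hx : x ∈ genIdeal F) : s * x ∈ genIdeal F := by
  obtain ⟨t, f, hf, rfl⟩ := hx; exact ⟨s * t, f, hf, (mul_assoc s t f).symm⟩

/-- A map `h` defined on an ideal `I ⊆ S` extends to an act map `S → A`. -/
def ExtendsHom {S : Type u} [Monoid S] {A : Type u} [MulAction S A] (I : Set S)
    (h : I → A) : Prop :=
  ∃ g : S → A, (∀ s t : S, g (s * t) = s • g t) ∧ ∀ x : I, g x = h x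

/-- `A` is weakly f-injective: homs from finitely generated right ideals extend to `S`. -/
def IsWeaklyFInjective (S : Type u) [Monoid S] (A : Type u) [MulAction S A] : Prop :=
  ∀ (F : Finset S) (h : genIdeal (F : Set S) → A),
    (∀ (s : S) (x : genIdeal (F : Set S)),
      h ⟨s * ↑x, genIdeal_smul _ s x.2⟩ = s • h x) →
    ExtendsHom (genIdeal (F : Set S)) h

/-- `A` is weakly p-injective: homs from principal right ideals extend to `S`. -/
def IsWeaklyPInjective (S : Type u) [Monoid S] (A : Type u) [MulAction S A] : Prop :=
  ∀ (t : S) (h : genIdeal {t} → A),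
    (∀ (s : S) (x : genIdeal {t}),
      h ⟨s * ↑x, genIdeal_smul _ s x.2⟩ = s • h x) →
    ExtendsHom (genIdeal {t}) h

/-- Auxiliary: a "code" for an act of size at most `#K` together with a map from `A`. -/
def PreenvCode (S A K : Type u) : Type u := Σ X : Set K, (S → X → X) × (A → X)

/-- Auxiliary: a code is good if it is realized by an actual act in `𝒞`. -/
def PreenvGood {S : Type u} [Monoid S] (𝒞 : (C : Type u) → [MulAction S C] → Prop)
    {A K : Type u} [MulAction S A] (c : PreenvCode S A K) : Prop :=
  ∃ (D : Type u) (inst : MulAction S D) (e : c.1 → D),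
    Function.Bijective e ∧ @𝒞 D inst ∧
    (∀ (s : S) (x : c.1), e (c.2.1 s x) = @SMul.smul S D inst.toSMul s (e x)) ∧
    (∀ (s : S) (a : A), e (c.2.2 (s • a)) = @SMul.smul S D inst.toSMul s (e (c.2.2 a)))

/-- sufficient set-theoretic condition for existence of a `𝒞`-preenvelope. -/
theorem hasPreenvelope_of_bound {S : Type u} [Monoid S]
    (𝒞 : (C : Type u) → [MulAction S C] → Prop)
    (hprod : ∀ (ι : Type u) (C : ι → Type u) [∀ i, MulAction S (C i)],
      (∀ i, 𝒞 (C i)) → 𝒞 ((i : ι) → C i))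
    (A : Type u) [MulAction S A]
    (hcard : ∃ κ : Cardinal.{u}, ℵ₀ ≤ κ ∧
      ∀ (C : Type u) [MulAction S C], 𝒞 C → ∀ T : SubMulAction S C, #T ≤ #A →
        ∃ B : SubMulAction S C, T ≤ B ∧ 𝒞 B ∧ #B ≤ κ) :
    HasPreenvelope 𝒞 A := by
  classical
  obtain ⟨κ, hκ, hbound⟩ := hcard
  set K : Type u := κ.out with hK
  set ι : Type u := {c : PreenvCode S A K // PreenvGood 𝒞 c} with hι
  choose D inst e ebij hCmem hsm heqv using fun i : ι => i.2
  letI instD : ∀ i : ι, MulAction S (D i) := inst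
  refine ⟨(i : ι) → D i, inferInstance, ⟨fun a i => e i (i.1.2.2 a), ?_⟩, ?_, ?_⟩
  · intro s a
    funext i
    exact heqv i s a
  · exact hprod ι D hCmem
  · intro C' instC' hC' f
    have hTcl : ∀ (s : S) {x : C'}, x ∈ Set.range f → s • x ∈ Set.range f := by
      rintro s x ⟨a, rfl⟩
      exact ⟨s • a, map_smul f s a⟩
    obtain ⟨B, hTB, hCB, hBκ⟩ := hbound C' hC'
      ⟨Set.range f, fun {s x} hx => hTcl s hx⟩ Cardinal.mk_range_le
    set g : A → B := fun a => ⟨f a, hTB ⟨a, rfl⟩⟩ with hg_def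
    have hg : ∀ (s : S) (a : A), g (s • a) = s • g a := by
      intro s a
      apply Subtype.ext
      exact map_smul f s a
    obtain ⟨j⟩ := (Cardinal.le_def _ _).mp (hBκ.trans_eq (Cardinal.mk_out κ).symm)
    set eX : B ≃ Set.range j := Equiv.ofInjective j j.injective with heX
    set sm : S → Set.range j → Set.range j := fun s x => eX (s • eX.symm x) with hsm_def
    set c : PreenvCode S A K := ⟨Set.range j, sm, fun a => eX (g a)⟩ with hc
    have hGood : PreenvGood 𝒞 c := by
      refine ⟨B, inferInstance, fun x => eX.symm x, eX.symm.bijective, hCB, ?_, ?_⟩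
      · intro s x
        show eX.symm (eX (s • eX.symm x)) = s • eX.symm x
        exact eX.symm_apply_apply _
      · intro s a
        show eX.symm (eX (g (s • a))) = s • eX.symm (eX (g a))
        rw [eX.symm_apply_apply, eX.symm_apply_apply, hg]
    set i : ι := ⟨c, hGood⟩ with hi
    set ψ : (B : Type u) ≃ D i := eX.trans (Equiv.ofBijective (e i) (ebij i)) with hψdef
    have hψ : ∀ (s : S) (b : B), ψ (s • b) = s • ψ b := by
      intro s b
      have h1 : eX (s • b) = sm s (eX b) := by
        rw [hsm_def]
        simp
      show e i (eX (s • b)) = s • e i (eX b)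
      rw [h1]
      exact hsm i s (eX b)
    have hψ' : ∀ (s : S) (d : D i), ψ.symm (s • d) = s • ψ.symm d := by
      intro s d
      apply ψ.injective
      rw [hψ, ψ.apply_symm_apply, ψ.apply_symm_apply]
    refine ⟨⟨fun p => ((ψ.symm (p i) : B) : C'), ?_⟩, ?_⟩
    · intro s p
      show ((ψ.symm ((s • p) i) : B) : C') = s • ((ψ.symm (p i) : B) : C')
      have : (s • p) i = s • p i := rfl
      rw [this, hψ']
      rfl
    · intro a
      show ((ψ.symm (e i (eX (g a))) : B) : C') = f a
      have : ψ (g a) = e i (eX (g a)) := rfl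
      rw [← this, ψ.symm_apply_apply]
end

section
/- Let S be a monoid and T a subact of an S-act A. Then there exists a pure subact U of A with T ⊆ U and |U| ≤ max{ℵ₀, |S|, |T|}. -/
universe u

open Cardinal

set_option linter.unusedSectionVars false

section Aux

variable {S A : Type u} [Monoid S] [MulAction S A]

/-- Encode an equation into a product, to count them. -/
def encEq {S B : Type u} {m : ℕ} : ActEq S B m → ULift.{u} (ℕ × ℕ × ℕ) × S × S × Option B
  | .xrxs i r s => (⟨(0, i, i)⟩, r, s, none)
  | .xrys i j r s => (⟨(1, i, j)⟩, r, s, none)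
  | .xra i r a => (⟨(2, i, 0)⟩, r, r, some a)

theorem encEq_inj {S B : Type u} {m : ℕ} : Function.Injective (@encEq S B m) := by
  intro e1 e2 h
  cases e1 <;> cases e2 <;> simp_all [encEq, Fin.val_inj]

end Aux

section Main

variable {S A : Type u} [Monoid S] [MulAction S A]

/-- Map an equation with constants in `X` to an equation over `A`. -/
def upEq {X : Set A} {n : ℕ} : ActEq S (↥X) n → ActEq S A n
  | .xrxs i r s => .xrxs i r s
  | .xrys i j r s => .xrys i j r s
  | .xra i r a => .xra i r (a : A)

theorem exists_up_list {X : Set A} {n : ℕ} :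
    ∀ E : List (ActEq S A n), (∀ e ∈ E, ConstIn X e) →
      ∃ E' : List (ActEq S (↥X) n), E'.map upEq = E := by
  intro E
  induction E with
  | nil => exact fun _ => ⟨[], rfl⟩
  | cons e E ih =>
    intro h
    obtain ⟨E', hE'⟩ := ih fun e he => h e (List.mem_cons_of_mem _ he)
    have he := h e List.mem_cons_self
    cases e with
    | xrxs i r s => exact ⟨.xrxs i r s :: E', by simp [upEq, hE']⟩
    | xrys i j r s => exact ⟨.xrys i j r s :: E', by simp [upEq, hE']⟩
    | xra i r a => exact ⟨.xra i r ⟨a, he⟩ :: E', by simp [upEq, hE']⟩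

theorem constIn_mono {X Y : Set A} (h : X ⊆ Y) {n : ℕ} {e : ActEq S A n} :
    ConstIn X e → ConstIn Y e := by
  cases e <;> simp [ConstIn] <;> exact fun ha => h ha

def stepSet (S : Type u) {A : Type u} [Monoid S] [MulAction S A] (X : Set A) : Set A :=
  {a | ∃ s : S, ∃ x ∈ X, a = s • x} ∪
  {a | ∃ (n : ℕ) (E : List (ActEq S A n)), (∀ e ∈ E, ConstIn X e) ∧
      ∃ (h : ∃ v : Fin n → A, ∀ e ∈ E, SatEq v e) (i : Fin n), a = h.choose i}

theorem subset_stepSet (X : Set A) : X ⊆ stepSet S X :=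
  fun a ha => Or.inl ⟨1, a, ha, (one_smul S a).symm⟩

def chainW (S : Type u) {A : Type u} [Monoid S] [MulAction S A] (T : Set A) : ℕ → Set A
  | 0 => T
  | k+1 => stepSet S (chainW S T k)

theorem chainW_mono (T : Set A) : Monotone (chainW S T) :=
  monotone_nat_of_le_succ fun k => subset_stepSet _

theorem exists_level {T : Set A} {n : ℕ} (E : List (ActEq S A n))
    (hc : ∀ e ∈ E, ConstIn (⋃ k, chainW S T k) e) :
    ∃ k, ∀ e ∈ E, ConstIn (chainW S T k) e := by
  induction E with
  | nil => exact ⟨0, by simp⟩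
  | cons e E ih =>
    obtain ⟨k1, hk1⟩ := ih fun e he => hc e (List.mem_cons_of_mem _ he)
    have he := hc e List.mem_cons_self
    have : ∃ k2, ConstIn (chainW S T k2) e := by
      cases e with
      | xra i r a =>
        obtain ⟨k, hk⟩ := Set.mem_iUnion.mp he
        exact ⟨k, hk⟩
      | xrxs i r s => exact ⟨0, trivial⟩
      | xrys i j r s => exact ⟨0, trivial⟩
    obtain ⟨k2, hk2⟩ := this
    refine ⟨max k1 k2, fun e' he' => ?_⟩
    rcases List.mem_cons.mp he' with rfl | hmem
    · exact constIn_mono (chainW_mono T (le_max_right k1 k2)) hk2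
    · exact constIn_mono (chainW_mono T (le_max_left k1 k2)) (hk1 e' hmem)

end Main

section Card

variable {S A : Type u} [Monoid S] [MulAction S A] {κ : Cardinal.{u}}

theorem mul_le_kappa {a b : Cardinal.{u}} (hκ : ℵ₀ ≤ κ) (ha : a ≤ κ) (hb : b ≤ κ) :
    a * b ≤ κ :=
  (mul_le_max a b).trans (max_le (max_le ha hb) hκ)

theorem card_actEq (hκ : ℵ₀ ≤ κ) (hS : #S ≤ κ) {X : Set A} (hX : #X ≤ κ) (m : ℕ) :
    #(ActEq S (↥X) m) ≤ κ := by
  refine (mk_le_of_injective (@encEq_inj S (↥X) m)).trans ?_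
  have h1 : #(ULift.{u} (ℕ × ℕ × ℕ)) ≤ κ := by
    simp only [mk_uLift, mk_prod, mk_nat, lift_aleph0, aleph0_mul_aleph0, lift_id]
    simpa [aleph0_mul_aleph0] using hκ
  have h2 : #(Option ↥X) ≤ κ :=
    (mk_option (α := ↥X)).le.trans ((add_le_max _ _).trans
      (max_le (max_le hX (one_le_aleph0.trans hκ)) hκ))
  simp only [mk_prod, lift_id]
  exact mul_le_kappa hκ h1 (mul_le_kappa hκ hS (mul_le_kappa hκ hS h2))

theorem card_stepSet (hκ : ℵ₀ ≤ κ) (hS : #S ≤ κ) {X : Set A} (hX : #X ≤ κ) :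
    #(stepSet S X) ≤ κ := by
  classical
  refine (mk_union_le _ _).trans ?_
  have hP1 : #{a : A | ∃ s : S, ∃ x ∈ X, a = s • x} ≤ κ := by
    have hsub : {a : A | ∃ s : S, ∃ x ∈ X, a = s • x} ⊆
        Set.range (fun p : S × ↥X => p.1 • (p.2 : A)) := by
      rintro a ⟨s, x, hx, rfl⟩
      exact ⟨(s, ⟨x, hx⟩), rfl⟩
    refine (mk_le_mk_of_subset hsub).trans (mk_range_le.trans ?_)
    simp only [mk_prod, lift_id]
    exact mul_le_kappa hκ hS hX
  have hP2 : #{a : A | ∃ (n : ℕ) (E : List (ActEq S A n)), (∀ e ∈ E, ConstIn X e) ∧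
      ∃ (h : ∃ v : Fin n → A, ∀ e ∈ E, SatEq v e) (i : Fin n), a = h.choose i} ≤ κ := by
    set Idx := (Σ n : ULift.{u} ℕ, List (ActEq S (↥X) n.down)) × ULift.{u} ℕ with hIdx
    set G : Idx → Option A := fun p =>
      if h : ∃ v : Fin p.1.1.down → A, ∀ e ∈ (p.1.2).map upEq, SatEq v e then
        if hi : p.2.down < p.1.1.down then some (h.choose ⟨p.2.down, hi⟩) else none
      else none with hG
    have claim : ∀ a ∈ {a : A | ∃ (n : ℕ) (E : List (ActEq S A n)), (∀ e ∈ E, ConstIn X e) ∧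
        ∃ (h : ∃ v : Fin n → A, ∀ e ∈ E, SatEq v e) (i : Fin n), a = h.choose i},
        ∃ p : Idx, G p = some a := by
      rintro a ⟨n, E, hc, h, i, rfl⟩
      obtain ⟨E', hE'⟩ := exists_up_list E hc
      subst hE'
      refine ⟨⟨⟨⟨n⟩, E'⟩, ⟨i.val⟩⟩, ?_⟩
      simp only [hG, dif_pos h, dif_pos i.isLt]
    set f : {a : A | ∃ (n : ℕ) (E : List (ActEq S A n)), (∀ e ∈ E, ConstIn X e) ∧
        ∃ (h : ∃ v : Fin n → A, ∀ e ∈ E, SatEq v e) (i : Fin n), a = h.choose i} → Idx :=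
      fun a => (claim a a.2).choose with hf
    have hfspec : ∀ a, G (f a) = some (a : A) := fun a => (claim a a.2).choose_spec
    have hfinj : Function.Injective f := by
      intro a b hab
      have := (hfspec a).symm.trans (by rw [hab, hfspec b])
      exact Subtype.ext (Option.some_injective _ this)
    refine (mk_le_of_injective hfinj).trans ?_
    have hSig : #((n : ULift.{u} ℕ) × List (ActEq S (↥X) n.down)) ≤ κ := by
      rw [mk_sigma]
      refine (sum_le_sum _ (fun _ => κ) fun n => ?_).trans ?_
      · exact (mk_list_le_max _).trans (max_le hκ (card_actEq hκ hS hX _))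
      · rw [sum_const']
        exact mul_le_kappa hκ (by simpa using hκ) le_rfl
    simp only [hIdx, mk_prod, lift_id]
    exact mul_le_kappa hκ hSig (by simpa using hκ)
  exact (add_le_max _ _).trans (max_le (max_le hP1 hP2) hκ)

end Card


/-- every subact `T` of `A` embeds in a pure subact `U` of `A`
with `|U| ≤ max {ℵ₀, |S|, |T|}`. -/
theorem exists_pure_subact {S A : Type u} [Monoid S] [MulAction S A]
    (T : SubMulAction S A) :
    ∃ U : SubMulAction S A, IsPure S (U : Set A) ∧ T ≤ U ∧
      #U ≤ max (max ℵ₀ #S) #T := by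
  set κ := max (max ℵ₀ #S) #T with hκdef
  have hκ : ℵ₀ ≤ κ := le_max_of_le_left (le_max_left _ _)
  have hS : #S ≤ κ := le_max_of_le_left (le_max_right _ _)
  set W := chainW S (T : Set A) with hW
  refine ⟨⟨⋃ k, W k, ?_⟩, ?_, ?_, ?_⟩
  · -- closed under smul
    rintro s a ha
    obtain ⟨k, hk⟩ := Set.mem_iUnion.mp ha
    exact Set.mem_iUnion.mpr ⟨k + 1, Or.inl ⟨s, a, hk, rfl⟩⟩
  · -- pure
    intro n E hc hsol
    obtain ⟨k, hk⟩ := exists_level E hc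
    refine ⟨hsol.choose, fun i => ?_, hsol.choose_spec⟩
    exact Set.mem_iUnion.mpr ⟨k + 1, Or.inr ⟨n, E, hk, hsol, i, rfl⟩⟩
  · -- T ≤ U
    intro x hx
    exact Set.mem_iUnion.mpr ⟨0, hx⟩
  · -- cardinality
    have hWk : ∀ k, #(W k) ≤ κ := by
      intro k
      induction k with
      | zero => exact le_max_of_le_right le_rfl
      | succ k ih => exact card_stepSet hκ hS ih
    have hU : (⋃ k, W k) = ⋃ k : ULift.{u} ℕ, W k.down := by
      ext a
      simp only [Set.mem_iUnion]
      exact ⟨fun ⟨k, hk⟩ => ⟨⟨k⟩, hk⟩, fun ⟨k, hk⟩ => ⟨k.down, hk⟩⟩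
    show #(⋃ k, W k) ≤ κ
    rw [hU]
    refine (mk_iUnion_le _).trans ?_
    refine mul_le_kappa hκ (by simpa using hκ) (ciSup_le' fun k => hWk k.down)
end

section
/- Let 𝒞 be a class of S-acts closed under pure subacts and under arbitrary direct products. Then every S-act has a 𝒞-preenvelope. -/
universe u

open Cardinal

namespace PreenvAux
open Set

variable (S : Type u) {B : Type u} [Monoid S] [MulAction S B]

def Solvable (E : Σ n, List (ActEq S B n)) : Prop :=
  ∃ v : Fin E.1 → B, ∀ e ∈ E.2, SatEq v e

noncomputable def sol (E : Σ n, List (ActEq S B n)) (h : Solvable S E) : Fin E.1 → B :=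
  h.choose

lemma sol_spec (E : Σ n, List (ActEq S B n)) (h : Solvable S E) :
    ∀ e ∈ E.2, SatEq (sol S E h) e := h.choose_spec

def solSet (U : Set B) : Set B :=
  ⋃ (E : Σ n, List (ActEq S B n)),
    ⋃ (h : (∀ e ∈ E.2, ConstIn U e) ∧ Solvable S E), Set.range (sol S E h.2)

def step (U : Set B) : Set B := ⋃ (m : S), (fun b : B => m • b) '' (U ∪ solSet S U)

lemma subset_step (U : Set B) : U ⊆ step S U := fun b hb =>
  Set.mem_iUnion.2 ⟨1, ⟨b, Or.inl hb, one_smul S b⟩⟩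

lemma smul_mem_step (U : Set B) (m : S) {b : B} (hb : b ∈ U) : m • b ∈ step S U :=
  Set.mem_iUnion.2 ⟨m, ⟨b, Or.inl hb, rfl⟩⟩

lemma solSet_subset_step (U : Set B) : solSet S U ⊆ step S U := fun b hb =>
  Set.mem_iUnion.2 ⟨1, ⟨b, Or.inr hb, one_smul S b⟩⟩

def chain (X : Set B) : ℕ → Set B
  | 0 => X
  | k+1 => step S (chain X k)

lemma chain_mono (X : Set B) : Monotone (chain S X) :=
  monotone_nat_of_le_succ fun k => subset_step S _

def pclosure (X : Set B) : Set B := ⋃ k, chain S X k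

lemma subset_pclosure (X : Set B) : X ⊆ pclosure S X := fun b hb =>
  Set.mem_iUnion.2 ⟨0, hb⟩

lemma smul_mem_pclosure (X : Set B) (m : S) {b : B} (hb : b ∈ pclosure S X) :
    m • b ∈ pclosure S X := by
  obtain ⟨k, hk⟩ := Set.mem_iUnion.1 hb
  exact Set.mem_iUnion.2 ⟨k + 1, smul_mem_step S _ m hk⟩

lemma constIn_mono {U V : Set B} (h : U ⊆ V) {n : ℕ} {e : ActEq S B n} :
    ConstIn U e → ConstIn V e := by
  cases e with
  | xra i r a => exact fun ha => h ha
  | xrxs i r s => exact fun _ => trivial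
  | xrys i j r s => exact fun _ => trivial

lemma exists_chain_const (X : Set B) {n : ℕ} :
    ∀ (E : List (ActEq S B n)), (∀ e ∈ E, ConstIn (pclosure S X) e) →
      ∃ k, ∀ e ∈ E, ConstIn (chain S X k) e := by
  intro E
  induction E with
  | nil => exact fun _ => ⟨0, by simp⟩
  | cons e E ih =>
    intro h
    obtain ⟨k1, hk1⟩ := ih fun e' he' => h e' (List.mem_cons_of_mem _ he')
    have he : ConstIn (pclosure S X) e := h e List.mem_cons_self
    have : ∃ k2, ConstIn (chain S X k2) e := by
      cases e with
      | xra i r a =>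
        obtain ⟨k2, hk2⟩ := Set.mem_iUnion.1 he
        exact ⟨k2, hk2⟩
      | xrxs i r s => exact ⟨0, trivial⟩
      | xrys i j r s => exact ⟨0, trivial⟩
    obtain ⟨k2, hk2⟩ := this
    refine ⟨max k1 k2, ?_⟩
    intro e' he'
    rcases List.mem_cons.1 he' with rfl | hmem
    · exact constIn_mono S (chain_mono S X (le_max_right k1 k2)) hk2
    · exact constIn_mono S (chain_mono S X (le_max_left k1 k2)) (hk1 e' hmem)

lemma isPure_pclosure (X : Set B) : IsPure S (pclosure S X) := by
  intro n E hconst hsolv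
  obtain ⟨k, hk⟩ := exists_chain_const S X E hconst
  have hs : Solvable S (⟨n, E⟩ : Σ n, List (ActEq S B n)) := hsolv
  refine ⟨sol S ⟨n, E⟩ hs, fun i => ?_, sol_spec S ⟨n, E⟩ hs⟩
  have : sol S ⟨n, E⟩ hs i ∈ solSet S (chain S X k) :=
    Set.mem_iUnion.2 ⟨⟨n, E⟩, Set.mem_iUnion.2 ⟨⟨hk, hs⟩, ⟨i, rfl⟩⟩⟩
  exact Set.mem_iUnion.2 ⟨k + 1, solSet_subset_step S _ this⟩


section Card
open Set

variable {κ : Cardinal.{u}}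

lemma mul_le_of (hk : ℵ₀ ≤ κ) {x y : Cardinal.{u}} (hx : x ≤ κ) (hy : y ≤ κ) :
    x * y ≤ κ :=
  (mul_le_mul' hx hy).trans (mul_eq_self hk).le

lemma add_le_of (hk : ℵ₀ ≤ κ) {x y : Cardinal.{u}} (hx : x ≤ κ) (hy : y ≤ κ) :
    x + y ≤ κ :=
  (add_le_add hx hy).trans (add_eq_self hk).le

def Code (U : Set B) (n : ℕ) : Type u :=
  (ULift.{u} (Fin n) × S × S) ⊕ (ULift.{u} (Fin n) × ULift.{u} (Fin n) × S × S) ⊕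
    (ULift.{u} (Fin n) × S × ↥U)

def decode (U : Set B) {n : ℕ} : Code S U n → ActEq S B n
  | .inl (i, r, s) => .xrxs i.down r s
  | .inr (.inl (i, j, r, s)) => .xrys i.down j.down r s
  | .inr (.inr (i, r, a)) => .xra i.down r ↑a

def encode (U : Set B) : {n : ℕ} → (e : ActEq S B n) → ConstIn U e → Code S U n
  | _, .xrxs i r s, _ => .inl (⟨i⟩, r, s)
  | _, .xrys i j r s, _ => .inr (.inl (⟨i⟩, ⟨j⟩, r, s))
  | _, .xra i r a, h => .inr (.inr (⟨i⟩, r, ⟨a, h⟩))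

lemma decode_encode (U : Set B) {n : ℕ} (e : ActEq S B n) (h : ConstIn U e) :
    decode S U (encode S U e h) = e := by cases e <;> rfl

lemma mk_code_le (hk : ℵ₀ ≤ κ) (hS : #S ≤ κ) {U : Set B} (hU : #↥U ≤ κ) (n : ℕ) :
    #(Code S U n) ≤ κ := by
  have hn : #(ULift.{u} (Fin n)) ≤ κ := by
    rw [mk_uLift, mk_fin, lift_natCast]
    exact (nat_lt_aleph0 n).le.trans hk
  simp only [Code, mk_sum, mk_prod, lift_id]
  exact add_le_of hk (mul_le_of hk hn (mul_le_of hk hS hS))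
    (add_le_of hk (mul_le_of hk hn (mul_le_of hk hn (mul_le_of hk hS hS)))
      (mul_le_of hk hn (mul_le_of hk hS hU)))

def Sys (U : Set B) : Type u :=
  {E : Σ n : ℕ, List (ActEq S B n) // ∀ e ∈ E.2, ConstIn U e}

lemma mk_sys_le (hk : ℵ₀ ≤ κ) (hS : #S ≤ κ) {U : Set B} (hU : #↥U ≤ κ) :
    #(Sys S U) ≤ κ := by
  have emb : Function.Injective
      (fun t : Sys S U =>
        (⟨⟨t.1.1⟩, t.1.2.attach.map fun x => encode S U x.1 (t.2 x.1 x.2)⟩ :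
          Σ n : ULift.{u} ℕ, List (Code S U n.down))) := by
    rintro ⟨⟨n, E⟩, hE⟩ ⟨⟨n', E'⟩, hE'⟩ h
    simp only at h
    obtain ⟨hn, h2⟩ := Sigma.mk.inj_iff.1 h
    obtain rfl : n = n' := congrArg ULift.down hn
    have h2 := eq_of_heq h2
    have hEE : E = E' := by
      have := congrArg (List.map (decode S U)) h2
      simpa [List.map_map, Function.comp, decode_encode, List.attach_map_val] using this
    subst hEE
    rfl
  refine le_trans (mk_le_of_injective emb) ?_
  rw [mk_sigma]
  refine le_trans (sum_le_sum _ (fun _ => κ) fun n =>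
    (mk_list_le_max _).trans (sup_le hk (mk_code_le S hk hS hU n.down))) ?_
  rw [sum_const', mk_uLift, mk_nat, lift_aleph0]
  exact mul_le_of hk hk le_rfl

lemma mk_solSet_le (hk : ℵ₀ ≤ κ) (hS : #S ≤ κ) {U : Set B} (hU : #↥U ≤ κ) :
    #↥(solSet S U) ≤ κ := by
  have hcover : solSet S U =
      ⋃ (t : Sys S U), ⋃ (h : Solvable S t.1), Set.range (sol S t.1 h) := by
    ext b
    simp only [solSet, Set.mem_iUnion]
    constructor
    · rintro ⟨E, ⟨hc, hs⟩, hb⟩; exact ⟨⟨E, hc⟩, hs, hb⟩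
    · rintro ⟨⟨E, hc⟩, hs, hb⟩; exact ⟨E, ⟨hc, hs⟩, hb⟩
  rw [hcover]
  refine le_trans mk_iUnion_le_sum_mk ?_
  refine le_trans (sum_le_sum _ (fun _ => ℵ₀) fun t => ?_) ?_
  · by_cases hsl : Solvable S t.1
    · refine le_trans (mk_le_mk_of_subset
        (?_ : _ ⊆ Set.range (sol S t.1 hsl))) ?_
      · intro x hx
        obtain ⟨h, hx⟩ := Set.mem_iUnion.1 hx
        exact hx
      · exact (Set.finite_range _).lt_aleph0.le
    · refine le_trans (mk_le_mk_of_subset (?_ : _ ⊆ (∅ : Set B))) (by simp)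
      intro x hx
      obtain ⟨h, _⟩ := Set.mem_iUnion.1 hx
      exact absurd h hsl
  · rw [sum_const']
    exact mul_le_of hk (mk_sys_le S hk hS hU) hk

lemma mk_step_le (hk : ℵ₀ ≤ κ) (hS : #S ≤ κ) {U : Set B} (hU : #↥U ≤ κ) :
    #↥(step S U) ≤ κ := by
  refine le_trans mk_iUnion_le_sum_mk ?_
  refine le_trans (sum_le_sum _ (fun _ => κ) fun m => ?_) ?_
  · refine le_trans mk_image_le ?_
    refine le_trans (mk_union_le _ _) ?_
    exact add_le_of hk hU (mk_solSet_le S hk hS hU)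
  · rw [sum_const']
    exact mul_le_of hk hS le_rfl

lemma mk_chain_le (hk : ℵ₀ ≤ κ) (hS : #S ≤ κ) {X : Set B} (hX : #↥X ≤ κ) (k : ℕ) :
    #↥(chain S X k) ≤ κ := by
  induction k with
  | zero => exact hX
  | succ k ih => exact mk_step_le S hk hS ih

lemma mk_pclosure_le (hk : ℵ₀ ≤ κ) (hS : #S ≤ κ) {X : Set B} (hX : #↥X ≤ κ) :
    #↥(pclosure S X) ≤ κ := by
  have hcover : pclosure S X = ⋃ (k : ULift.{u} ℕ), chain S X k.down := by
    ext b
    simp only [pclosure, Set.mem_iUnion]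
    exact ⟨fun ⟨k, h⟩ => ⟨⟨k⟩, h⟩, fun ⟨k, h⟩ => ⟨k.down, h⟩⟩
  rw [hcover]
  refine le_trans mk_iUnion_le_sum_mk ?_
  refine le_trans (sum_le_sum _ (fun _ => κ) fun k => mk_chain_le S hk hS hX k.down) ?_
  rw [sum_const', mk_uLift, mk_nat, lift_aleph0]
  exact mul_le_of hk hk le_rfl

lemma exists_pure_small (hk : ℵ₀ ≤ κ) (hS : #S ≤ κ) (X : Set B) (hX : #↥X ≤ κ) :
    ∃ U : SubMulAction S B, X ⊆ ↑U ∧ IsPure S (↑U : Set B) ∧ #↥U ≤ κ := by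
  refine ⟨⟨pclosure S X, fun {c} {x} hx => smul_mem_pclosure S X c hx⟩,
    subset_pclosure S X, isPure_pclosure S X, mk_pclosure_le S hk hS hX⟩

end Card


section Main

variable {S : Type u} [Monoid S] (𝒞 : (C : Type u) → [MulAction S C] → Prop)
variable {A : Type u} [MulAction S A]

/-- `W` is isomorphic (equivariantly) to some member of `𝒞`. -/
def IsoC (W : Type u) (instW : MulAction S W) : Prop :=
  ∃ (D : Type u) (instD : MulAction S D),
    letI := instW; letI := instD;
    (𝒞 D ∧ ∃ ψ : W ≃ D, ∀ (m : S) (x : W), ψ (m • x) = m • ψ x)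

/-- A packaged member of `𝒞` together with a map from `A`, which is an
isomorphic copy of `W` compatibly with `h` whenever `W` has a `𝒞`-copy at all. -/
def Pack (W : Type u) (instW : MulAction S W)
    (h : @MulActionHom S S id A _ W instW.toSMul) : Type (u + 1) :=
  letI := instW
  Σ' (D : Type u) (instD : MulAction S D),
    letI := instD
    Σ' (fD : A →[S] D), 𝒞 D ∧
      (IsoC 𝒞 W instW → ∃ ψ : W ≃ D,
        (∀ (m : S) (x : W), ψ (m • x) = m • ψ x) ∧ ∀ a, fD a = ψ (h a))

lemma pack_nonempty
    (hprod : ∀ (ι : Type u) (C : ι → Type u) [∀ i, MulAction S (C i)],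
      (∀ i, 𝒞 (C i)) → 𝒞 ((i : ι) → C i))
    (W : Type u) (instW : MulAction S W)
    (h : @MulActionHom S S id A _ W instW.toSMul) :
    Nonempty (Pack 𝒞 W instW h) := by
  letI := instW
  by_cases hiso : IsoC 𝒞 W instW
  · obtain ⟨D, instD, h𝒞, ψ, hψ⟩ := hiso
    letI := instD
    refine ⟨⟨D, instD, ⟨fun a => ψ (h a), ?_⟩, h𝒞, fun _ => ⟨ψ, hψ, fun a => rfl⟩⟩⟩
    intro m a
    simp only [id_eq]
    rw [map_smul, hψ]
  · refine ⟨⟨(fun _ : PEmpty.{u + 1} => PUnit.{u + 1}) |> (fun Cf => (i : PEmpty.{u+1}) → Cf i),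
      inferInstance, ⟨fun _ i => i.elim, ?_⟩,
      hprod PEmpty.{u + 1} (fun _ => PUnit.{u + 1}) (fun i => i.elim), fun hi => absurd hi hiso⟩⟩
    intro m a
    funext i
    exact i.elim

noncomputable def pick
    (hprod : ∀ (ι : Type u) (C : ι → Type u) [∀ i, MulAction S (C i)],
      (∀ i, 𝒞 (C i)) → 𝒞 ((i : ι) → C i))
    (W : Type u) (instW : MulAction S W)
    (h : @MulActionHom S S id A _ W instW.toSMul) : Pack 𝒞 W instW h :=
  Classical.choice (pack_nonempty 𝒞 hprod W instW h)

end Main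

end PreenvAux

/-- a class closed under pure subacts and products is preenveloping. -/
theorem preenveloping_of_closed {S : Type u} [Monoid S]
    (𝒞 : (C : Type u) → [MulAction S C] → Prop)
    (hpure : ∀ (C : Type u) [MulAction S C], 𝒞 C →
      ∀ U : SubMulAction S C, IsPure S (U : Set C) → 𝒞 U)
    (hprod : ∀ (ι : Type u) (C : ι → Type u) [∀ i, MulAction S (C i)],
      (∀ i, 𝒞 (C i)) → 𝒞 ((i : ι) → C i)) :
    ∀ (A : Type u) [MulAction S A], HasPreenvelope 𝒞 A := by
  intro A instA
  classical
  set κ : Cardinal.{u} := max (max #A #S) ℵ₀ with hκ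
  have hk : ℵ₀ ≤ κ := le_max_right _ _
  have hS : #S ≤ κ := le_trans (le_max_right _ _) (le_max_left _ _)
  have hA : #A ≤ κ := le_trans (le_max_left _ _) (le_max_left _ _)
  let K : Type u := Quotient.out κ
  have hK : #K = κ := mk_out κ
  let Idx : Type u := Σ (s : Set K), Σ (act : MulAction S ↥s),
    @MulActionHom S S id A _ ↥s act.toSMul
  let pk := fun j : Idx => PreenvAux.pick 𝒞 hprod ↥j.1 j.2.1 j.2.2
  let D : Idx → Type u := fun j => (pk j).1
  letI instD : ∀ j, MulAction S (D j) := fun j => (pk j).2.1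
  have hCD : ∀ j, 𝒞 (D j) := fun j => (pk j).2.2.2.1
  let P : Type u := (j : Idx) → D j
  have hP : 𝒞 P := hprod Idx D hCD
  let φ : A →[S] P := ⟨fun a j => (pk j).2.2.1 a, by
    intro m a
    funext j
    exact map_smul ((pk j).2.2.1) m a⟩
  refine ⟨P, inferInstance, φ, hP, ?_⟩
  intro C' instC' hC' f
  have hXA : #↥(Set.range f) ≤ κ := mk_range_le.trans hA
  obtain ⟨U, hXU, hUpure, hUcard⟩ :=
    PreenvAux.exists_pure_small S hk hS (Set.range f) hXA
  have hCU : 𝒞 ↥U := hpure C' hC' U hUpure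
  let h₀ : A →[S] ↥U := ⟨fun a => ⟨f a, hXU ⟨a, rfl⟩⟩, by
    intro m a
    ext
    simp only [id_eq]
    rw [SubMulAction.val_smul]
    exact map_smul f m a⟩
  have hUK : #↥U ≤ #K := by rw [hK]; exact hUcard
  obtain ⟨e⟩ := (Cardinal.le_def _ _).1 hUK
  let q : ↥U ≃ ↥(Set.range (e : ↥U → K)) := Equiv.ofInjective _ e.injective
  letI smulS : SMul S ↥(Set.range (e : ↥U → K)) := ⟨fun m x => q (m • q.symm x)⟩
  have hsmul : ∀ (m : S) (x : ↥(Set.range (e : ↥U → K))),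
      m • x = q (m • q.symm x) := fun _ _ => rfl
  letI actS : MulAction S ↥(Set.range (e : ↥U → K)) :=
    { one_smul := by intro x; rw [hsmul, one_smul, Equiv.apply_symm_apply]
      mul_smul := by
        intro m m' x
        rw [hsmul, hsmul, hsmul, Equiv.symm_apply_apply, mul_smul] }
  have hq : ∀ (m : S) (x : ↥U), q (m • x) = m • q x := by
    intro m x
    rw [hsmul, Equiv.symm_apply_apply]
  have hq' : ∀ (m : S) (x : ↥(Set.range (e : ↥U → K))),
      q.symm (m • x) = m • q.symm x := by
    intro m x
    rw [hsmul, Equiv.symm_apply_apply]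
  let hs : A →[S] ↥(Set.range (e : ↥U → K)) := ⟨fun a => q (h₀ a), by
    intro m a
    simp only [id_eq]
    rw [map_smul, hq]⟩
  let j₀ : Idx := ⟨Set.range (e : ↥U → K), actS, hs⟩
  have hiso : PreenvAux.IsoC 𝒞 ↥(Set.range (e : ↥U → K)) actS := by
    refine ⟨↥U, inferInstance, hCU, q.symm, ?_⟩
    intro m x
    exact hq' m x
  obtain ⟨ψ, hψ, hfψ⟩ := (pk j₀).2.2.2.2 hiso
  have hψ' : ∀ (m : S) (d : D j₀), ψ.symm (m • d) = m • ψ.symm d := by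
    intro m d
    apply ψ.injective
    rw [Equiv.apply_symm_apply, hψ, Equiv.apply_symm_apply]
  refine ⟨⟨fun v => ↑(q.symm (ψ.symm (v j₀))), ?_⟩, ?_⟩
  · intro m v
    simp only [id_eq]
    have : (m • v) j₀ = m • v j₀ := rfl
    rw [this, hψ', hq', SubMulAction.val_smul]
  · intro a
    show ↑(q.symm (ψ.symm ((pk j₀).2.2.1 a))) = f a
    rw [hfψ a]
    show (↑(q.symm (ψ.symm (ψ (q (h₀ a))))) : C') = f a
    rw [Equiv.symm_apply_apply, Equiv.symm_apply_apply]
    rfl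
end

section
/- The direct product of any family of absolutely pure S-acts is absolutely pure. -/
universe u

open Cardinal

/-! ### Auxiliary constructions for STATEMENT 8 -/

section Aux

variable {S A B X : Type u} [Monoid S] [MulAction S A] [MulAction S B] [MulAction S X]

instance sumSMul : SMul S (A ⊕ B) := ⟨fun s u => Sum.map (s • ·) (s • ·) u⟩

@[simp] lemma sum_smul_inl (s : S) (a : A) : s • (Sum.inl a : A ⊕ B) = Sum.inl (s • a) := rfl
@[simp] lemma sum_smul_inr (s : S) (b : B) : s • (Sum.inr b : A ⊕ B) = Sum.inr (s • b) := rfl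

instance sumMulAction : MulAction S (A ⊕ B) where
  one_smul u := by cases u <;> simp
  mul_smul s t u := by cases u <;> simp [mul_smul]

/-- Data for a pushout of an injective act map `g : X → B` along `p : X → A`. -/
structure PData (S A B X : Type u) [Monoid S] [MulAction S A] [MulAction S B]
    [MulAction S X] where
  g : X →[S] B
  p : X →[S] A
  inj : Function.Injective g

/-- Normal form for the pushout relation. -/
noncomputable def pnorm (d : PData S A B X) : A ⊕ B → A ⊕ B
  | .inl a => .inl a
  | .inr b =>
    letI := Classical.dec (∃ x, d.g x = b)
    if h : ∃ x, d.g x = b then .inl (d.p h.choose) else .inr b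

lemma pnorm_inl (d : PData S A B X) (a : A) : pnorm d (.inl a) = .inl a := rfl

lemma pnorm_inr_eq (d : PData S A B X) (b : B) :
    pnorm d (.inr b) = (letI := Classical.dec (∃ x, d.g x = b);
      if h : ∃ x, d.g x = b then Sum.inl (d.p h.choose) else Sum.inr b) := rfl

lemma pnorm_inr_pos (d : PData S A B X) (b : B) (h : ∃ x, d.g x = b) :
    pnorm d (.inr b) = .inl (d.p h.choose) := by
  rw [pnorm_inr_eq, dif_pos h]

lemma pnorm_inr_neg (d : PData S A B X) (b : B) (h : ¬ ∃ x, d.g x = b) :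
    pnorm d (.inr b) = .inr b := by
  rw [pnorm_inr_eq, dif_neg h]

lemma pnorm_smul (d : PData S A B X) (s : S) (u : A ⊕ B) :
    pnorm d (s • u) = pnorm d (s • pnorm d u) := by
  cases u with
  | inl a => rfl
  | inr b =>
    by_cases h : ∃ x, d.g x = b
    · have hc : d.g h.choose = b := h.choose_spec
      have h2 : ∃ x, d.g x = s • b := ⟨s • h.choose, by rw [map_smul, hc]⟩
      have h3 : d.p h2.choose = s • d.p h.choose := by
        have : d.g h2.choose = d.g (s • h.choose) := by
          rw [h2.choose_spec, map_smul, hc]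
        rw [d.inj this, map_smul]
      show pnorm d (.inr (s • b)) = pnorm d (s • pnorm d (.inr b))
      rw [pnorm_inr_pos d b h]
      show pnorm d (.inr (s • b)) = pnorm d (.inl (s • d.p h.choose))
      rw [pnorm_inr_pos d _ h2, h3]
      rfl
    · rw [pnorm_inr_neg d b h]

/-- The pushout setoid. -/
def pSetoid (d : PData S A B X) : Setoid (A ⊕ B) :=
  ⟨fun u v => pnorm d u = pnorm d v,
   ⟨fun _ => rfl, fun h => h.symm, fun h1 h2 => h1.trans h2⟩⟩

/-- The pushout act. -/
@[reducible] def PO (d : PData S A B X) : Type u := Quotient (pSetoid d)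

noncomputable instance poSMul (d : PData S A B X) : SMul S (PO d) :=
  ⟨fun s => Quotient.map (s • ·) (fun u v h => by
    show pnorm d (s • u) = pnorm d (s • v)
    rw [pnorm_smul, h, ← pnorm_smul])⟩

lemma po_smul_mk (d : PData S A B X) (s : S) (u : A ⊕ B) :
    s • (Quotient.mk (pSetoid d) u : PO d) = Quotient.mk (pSetoid d) (s • u) := rfl

noncomputable instance poMulAction (d : PData S A B X) : MulAction S (PO d) where
  one_smul q := Quotient.inductionOn q fun u => by
    rw [po_smul_mk, one_smul]
  mul_smul s t q := Quotient.inductionOn q fun u => by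
    rw [po_smul_mk, po_smul_mk, po_smul_mk, mul_smul]

/-- The inclusion of `A` into the pushout. -/
noncomputable def toA (d : PData S A B X) : A →[S] PO d :=
  ⟨fun a => Quotient.mk (pSetoid d) (.inl a), fun _ _ => rfl⟩

/-- The inclusion of `B` into the pushout. -/
noncomputable def toB (d : PData S A B X) : B →[S] PO d :=
  ⟨fun b => Quotient.mk (pSetoid d) (.inr b), fun _ _ => rfl⟩

lemma toA_inj (d : PData S A B X) : Function.Injective (toA d) := by
  intro x y hxy
  have := Quotient.exact hxy
  have h2 : (Sum.inl x : A ⊕ B) = Sum.inl y := this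
  exact Sum.inl.inj h2

lemma toB_g (d : PData S A B X) (x : X) : toB d (d.g x) = toA d (d.p x) := by
  apply Quotient.sound
  show pnorm d (.inr (d.g x)) = pnorm d (.inl (d.p x))
  have h : ∃ y, d.g y = d.g x := ⟨x, rfl⟩
  rw [pnorm_inr_pos d _ h, d.inj h.choose_spec]
  rfl

end Aux

/-- Lift an equation over `B` with constants in the range of `i` to an equation over `P`. -/
noncomputable def liftEq {S B P : Type u} (i : P → B) {n : ℕ} :
    (e : ActEq S B n) → ConstIn (Set.range i) e → ActEq S P n
  | .xrxs j r s, _ => .xrxs j r s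
  | .xrys j j' r s, _ => .xrys j j' r s
  | .xra j r _, h => .xra j r h.choose

/-- Map the constants of an equation along a function. -/
def mapEq {S B C : Type u} (f : B → C) {n : ℕ} : ActEq S B n → ActEq S C n
  | .xrxs j r s => .xrxs j r s
  | .xrys j j' r s => .xrys j j' r s
  | .xra j r a => .xra j r (f a)

/-- a product of absolutely pure acts is absolutely pure. -/
theorem prod_absolutelyPure {S : Type u} [Monoid S]
    (ι : Type u) (C : ι → Type u) [∀ i, MulAction S (C i)]
    (h : ∀ i, IsAbsolutelyPure S (C i)) :
    IsAbsolutelyPure S ((i : ι) → C i) := by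
  intro B _ i hi n E hC hsol
  obtain ⟨v, hv⟩ := hsol
  classical
  -- lift the constants of the system to the product
  set E' : List (ActEq S ((k : ι) → C k) n) :=
    E.pmap (fun e he => liftEq (⇑i) e (hC e he)) (fun _ he => he) with hE'
  -- for each coordinate k, solve the projected system in C k
  have key : ∀ k : ι, ∃ u : Fin n → C k,
      ∀ e' ∈ E', SatEq u (mapEq (fun x => x k) e') := by
    intro k
    set d : PData S (C k) B ((j : ι) → C j) :=
      ⟨i, ⟨fun x => x k, fun _ _ => rfl⟩, hi⟩ with hd
    have hdg : ∀ x, d.g x = i x := fun _ => rfl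
    have hdp : ∀ x, d.p x = x k := fun _ => rfl
    -- the projected system over the pushout
    have hpure := h k (PO d) (toA d) (toA_inj d) n
      (E'.map (mapEq (fun x => toA d (x k))))
    obtain ⟨w, hwr, hws⟩ := hpure
      (by
        intro e'' he''
        obtain ⟨e', _, rfl⟩ := List.mem_map.mp he''
        cases e' with
        | xrxs j r s => trivial
        | xrys j j' r s => trivial
        | xra j r a => exact ⟨a k, rfl⟩)
      (by
        refine ⟨fun j => toB d (v j), ?_⟩
        intro e'' he''
        obtain ⟨e', he', rfl⟩ := List.mem_map.mp he''
        obtain ⟨e, he, rfl⟩ := List.mem_pmap.mp he'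
        cases e with
        | xrxs j r s =>
          have hv' : r • v j = s • v j := hv _ he
          show r • toB d (v j) = s • toB d (v j)
          rw [← map_smul, ← map_smul, hv']
        | xrys j j' r s =>
          have hv' : r • v j = s • v j' := hv _ he
          show r • toB d (v j) = s • toB d (v j')
          rw [← map_smul, ← map_smul, hv']
        | xra j r a =>
          have hv' : r • v j = a := hv _ he
          have hmem : a ∈ Set.range ⇑i := hC _ he
          have hc : d.g hmem.choose = a := hmem.choose_spec
          show r • toB d (v j) = toA d (hmem.choose k)
          calc r • toB d (v j) = toB d (r • v j) := (map_smul _ _ _).symm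
            _ = toB d (d.g hmem.choose) := by rw [hv', hc]
            _ = toA d (d.p hmem.choose) := toB_g d _
            _ = toA d (hmem.choose k) := rfl)
    refine ⟨fun j => (hwr j).choose, ?_⟩
    intro e' he'
    have hmm : ∀ e', e' ∈ E' → mapEq (fun x => toA d (x k)) e' ∈
        E'.map (mapEq (fun x => toA d (x k))) := fun e' he' => List.mem_map_of_mem he'
    have hws' := hws _ (hmm e' he')
    cases e' with
    | xrxs j r s =>
      have : r • w j = s • w j := hws'
      rw [← (hwr j).choose_spec, ← map_smul, ← map_smul] at this
      exact toA_inj d this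
    | xrys j j' r s =>
      have : r • w j = s • w j' := hws'
      rw [← (hwr j).choose_spec, ← (hwr j').choose_spec, ← map_smul, ← map_smul] at this
      exact toA_inj d this
    | xra j r a =>
      have : r • w j = toA d (a k) := hws'
      rw [← (hwr j).choose_spec, ← map_smul] at this
      exact toA_inj d this
  choose uu huu using key
  refine ⟨fun j => i (fun k => uu k j), fun j => ⟨_, rfl⟩, ?_⟩
  intro e he
  have he' : liftEq (⇑i) e (hC e he) ∈ E' :=
    List.mem_pmap.mpr ⟨e, he, rfl⟩
  cases e with
  | xrxs j r s =>
    show r • i (fun k => uu k j) = s • i (fun k => uu k j)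
    rw [← map_smul, ← map_smul]
    congr 1
    funext k
    exact huu k _ he'
  | xrys j j' r s =>
    show r • i (fun k => uu k j) = s • i (fun k => uu k j')
    rw [← map_smul, ← map_smul]
    congr 1
    funext k
    exact huu k _ he'
  | xra j r a =>
    have hmem : a ∈ Set.range ⇑i := hC _ he
    show r • i (fun k => uu k j) = a
    rw [← map_smul, ← hmem.choose_spec]
    congr 1
    funext k
    exact huu k _ he'
end

section
/- A pure subact of an absolutely pure S-act is absolutely pure. -/
universe u

open Cardinal

section Aux

variable {S A B : Type u} [Monoid S] [MulAction S A] [MulAction S B]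

/-- Map the constants of an equation along a function. -/
def pushEq (f : A → B) {n : ℕ} : ActEq S A n → ActEq S B n
  | .xrxs i r s => .xrxs i r s
  | .xrys i j r s => .xrys i j r s
  | .xra i r a => .xra i r (f a)

theorem satEq_push (f : A →[S] B) {n : ℕ} (v : Fin n → A) (e : ActEq S A n)
    (h : SatEq v e) : SatEq (fun k => f (v k)) (pushEq f e) := by
  cases e with
  | xrxs i r s => simp only [SatEq, pushEq] at h ⊢; rw [← map_smul, ← map_smul, h]
  | xrys i j r s => simp only [SatEq, pushEq] at h ⊢; rw [← map_smul, ← map_smul, h]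
  | xra i r a => simp only [SatEq, pushEq] at h ⊢; rw [← map_smul, h]

theorem satEq_reflect (f : A →[S] B) (hf : Function.Injective f) {n : ℕ} (v : Fin n → A)
    (e : ActEq S A n) (h : SatEq (fun k => f (v k)) (pushEq f e)) : SatEq v e := by
  cases e with
  | xrxs i r s =>
      simp only [SatEq, pushEq] at h ⊢
      exact hf (by rw [map_smul, map_smul, h])
  | xrys i j r s =>
      simp only [SatEq, pushEq] at h ⊢
      exact hf (by rw [map_smul, map_smul, h])
  | xra i r a =>
      simp only [SatEq, pushEq] at h ⊢
      exact hf (by rw [map_smul, h])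

variable (U : SubMulAction S A) (i : ↥U →[S] B)

/-- The amalgamating relation on `A ⊕ B` identifying `u ∈ U` with `i u`. -/
def amalgRel : Sum A B → Sum A B → Prop
  | .inl a, .inl a' => a = a'
  | .inr b, .inr b' => b = b'
  | .inl a, .inr b => ∃ u : U, (↑u : A) = a ∧ i u = b
  | .inr b, .inl a => ∃ u : U, (↑u : A) = a ∧ i u = b

theorem amalgRel_equiv (hi : Function.Injective i) : Equivalence (amalgRel U i) := by
  constructor
  · intro x; cases x <;> rfl
  · intro x y h; cases x <;> cases y <;> first | exact h.symm | exact h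
  · intro x y z hxy hyz
    cases x <;> cases y <;> cases z
    · exact hxy.trans hyz
    · obtain ⟨u, hu1, hu2⟩ := hyz
      exact ⟨u, hu1.trans hxy.symm, hu2⟩
    · obtain ⟨u, hu1, hu2⟩ := hxy
      obtain ⟨u', hu1', hu2'⟩ := hyz
      have huu : u = u' := hi (hu2.trans hu2'.symm)
      exact hu1.symm.trans (by rw [huu]; exact hu1')
    · obtain ⟨u, hu1, hu2⟩ := hxy
      exact ⟨u, hu1, hu2.trans hyz⟩
    · obtain ⟨u, hu1, hu2⟩ := hxy
      exact ⟨u, hu1.trans hyz, hu2⟩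
    · obtain ⟨u, hu1, hu2⟩ := hxy
      obtain ⟨u', hu1', hu2'⟩ := hyz
      have huu : u = u' := Subtype.coe_injective (hu1.trans hu1'.symm)
      exact hu2.symm.trans (by rw [huu]; exact hu2')
    · obtain ⟨u, hu1, hu2⟩ := hyz
      exact ⟨u, hu1, hu2.trans hxy.symm⟩
    · exact hxy.trans hyz

/-- The setoid for the amalgam. -/
def amalgSetoid (hi : Function.Injective i) : Setoid (Sum A B) :=
  ⟨amalgRel U i, amalgRel_equiv U i hi⟩

/-- The amalgam (pushout) of `A` and `B` over `U`. -/
def Amalg (hi : Function.Injective i) : Type u := Quotient (amalgSetoid U i hi)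

theorem amalg_smul_aux (hi : Function.Injective i) (s : S) :
    ∀ x y : Sum A B, amalgRel U i x y →
      amalgRel U i (Sum.map (s • ·) (s • ·) x) (Sum.map (s • ·) (s • ·) y) := by
  intro x y h
  cases x <;> cases y
  · exact congrArg _ h
  · obtain ⟨u, hu1, hu2⟩ := h
    exact ⟨s • u, by simp [← hu1], by rw [map_smul, hu2]⟩
  · obtain ⟨u, hu1, hu2⟩ := h
    exact ⟨s • u, by simp [← hu1], by rw [map_smul, hu2]⟩
  · exact congrArg _ h

instance amalgMulAction (hi : Function.Injective i) : MulAction S (Amalg U i hi) where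
  smul s := Quotient.map (Sum.map (s • ·) (s • ·)) (amalg_smul_aux U i hi s)
  one_smul x := by
    induction x using Quotient.ind with
    | _ x =>
      show Quotient.map _ _ _ = _
      cases x <;> simp [Quotient.map_mk, Sum.map]
  mul_smul r s x := by
    induction x using Quotient.ind with
    | _ x =>
      show Quotient.map _ _ _ = Quotient.map _ _ (Quotient.map _ _ _)
      cases x <;> simp [Quotient.map_mk, Sum.map, mul_smul]

/-- The canonical map `A → Amalg`. -/
def amalgL (hi : Function.Injective i) : A →[S] Amalg U i hi :=
  ⟨fun a => Quotient.mk _ (.inl a), fun _ _ => rfl⟩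

/-- The canonical map `B → Amalg`. -/
def amalgR (hi : Function.Injective i) : B →[S] Amalg U i hi :=
  ⟨fun b => Quotient.mk _ (.inr b), fun _ _ => rfl⟩

theorem amalgL_injective (hi : Function.Injective i) :
    Function.Injective (amalgL U i hi) := by
  intro a a' h
  exact Quotient.exact h

theorem amalgR_injective (hi : Function.Injective i) :
    Function.Injective (amalgR U i hi) := by
  intro b b' h
  exact Quotient.exact h

theorem amalg_comm (hi : Function.Injective i) (u : ↥U) :
    amalgR U i hi (i u) = amalgL U i hi (↑u : A) :=
  (Quotient.sound (show amalgRel U i (Sum.inr (i u)) (Sum.inl (↑u : A)) from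
    ⟨u, rfl, rfl⟩)).symm

/-- Pull an equation over `B` with constants in `range i` back to an equation over `A`
with constants in `U`. -/
noncomputable def pullEq (i : ↥U →[S] B) {n : ℕ} :
    (e : ActEq S B n) → ConstIn (Set.range ⇑i) e → ActEq S A n
  | .xrxs k r s, _ => .xrxs k r s
  | .xrys k j r s, _ => .xrys k j r s
  | .xra k r _, h => .xra k r ↑(h.choose)

end Aux

/-- a pure subact of an absolutely pure act is absolutely pure. -/
theorem pure_subact_absolutelyPure {S A : Type u} [Monoid S] [MulAction S A]
    (hA : IsAbsolutelyPure S A) (U : SubMulAction S A)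
    (hU : IsPure S (U : Set A)) : IsAbsolutelyPure S U := by
  intro B _ i hi
  intro n E hconst hsolv
  obtain ⟨vB, hvB⟩ := hsolv
  have hpureA := hA (Amalg U i hi) (amalgL U i hi) (amalgL_injective U i hi)
  have hsolD : ∃ v : Fin n → Amalg U i hi,
      ∀ e ∈ E.map (pushEq (amalgR U i hi)), SatEq v e := by
    refine ⟨fun k => amalgR U i hi (vB k), ?_⟩
    intro e he
    rw [List.mem_map] at he
    obtain ⟨e', he', rfl⟩ := he
    exact satEq_push _ _ _ (hvB e' he')
  have hconstD : ∀ e ∈ E.map (pushEq (amalgR U i hi)),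
      ConstIn (Set.range ⇑(amalgL U i hi)) e := by
    intro e he
    rw [List.mem_map] at he
    obtain ⟨e', he', rfl⟩ := he
    cases e' with
    | xrxs k r s => trivial
    | xrys k j r s => trivial
    | xra k r c =>
      obtain ⟨u, hu⟩ := hconst _ he'
      exact ⟨↑u, by rw [← hu, amalg_comm]⟩
  obtain ⟨w, hwA, hwE⟩ := hpureA n _ hconstD hsolD
  choose a ha using hwA
  have hwfun : w = fun k => amalgL U i hi (a k) := funext fun k => (ha k).symm
  have key : ∀ e' (he' : e' ∈ E),
      pushEq (amalgL U i hi) (pullEq U i e' (hconst e' he')) =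
        pushEq (amalgR U i hi) e' := by
    intro e' he'
    cases e' with
    | xrxs k r s => rfl
    | xrys k j r s => rfl
    | xra k r c =>
      have h := hconst (ActEq.xra k r c) he'
      have hc : amalgL U i hi ↑(h.choose) = amalgR U i hi c :=
        (amalg_comm U i hi h.choose).symm.trans (congrArg _ h.choose_spec)
      exact congrArg (ActEq.xra k r) hc
  have hsolvEA : ∃ v : Fin n → A, ∀ e ∈ E.pmap (pullEq U i) hconst, SatEq v e := by
    refine ⟨a, ?_⟩
    intro e he
    rw [List.mem_pmap] at he
    obtain ⟨e', he', rfl⟩ := he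
    refine satEq_reflect (amalgL U i hi) (amalgL_injective U i hi) a _ ?_
    have := hwE (pushEq (amalgR U i hi) e') (List.mem_map.mpr ⟨e', he', rfl⟩)
    rw [hwfun] at this
    rw [key e' he']
    exact this
  have hconstEA : ∀ e ∈ E.pmap (pullEq U i) hconst, ConstIn (U : Set A) e := by
    intro e he
    rw [List.mem_pmap] at he
    obtain ⟨e', he', rfl⟩ := he
    cases e' with
    | xrxs k r s => trivial
    | xrys k j r s => trivial
    | xra k r c => exact ((hconst (ActEq.xra k r c) he').choose).2
  obtain ⟨vA, hvAU, hvAE⟩ := hU n _ hconstEA hsolvEA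
  refine ⟨fun k => i ⟨vA k, hvAU k⟩, fun k => ⟨⟨vA k, hvAU k⟩, rfl⟩, ?_⟩
  intro e he
  cases e with
  | xrxs k r s =>
      have hs := hvAE (pullEq U i (ActEq.xrxs k r s) (hconst _ he))
        (List.mem_pmap.mpr ⟨_, he, rfl⟩)
      simp only [SatEq, pullEq] at hs ⊢
      rw [← map_smul, ← map_smul]
      exact congrArg i (Subtype.ext hs)
  | xrys k j r s =>
      have hs := hvAE (pullEq U i (ActEq.xrys k j r s) (hconst _ he))
        (List.mem_pmap.mpr ⟨_, he, rfl⟩)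
      simp only [SatEq, pullEq] at hs ⊢
      rw [← map_smul, ← map_smul]
      exact congrArg i (Subtype.ext hs)
  | xra k r c =>
      have h := hconst (ActEq.xra k r c) he
      have hs := hvAE (pullEq U i (ActEq.xra k r c) h)
        (List.mem_pmap.mpr ⟨_, he, rfl⟩)
      simp only [SatEq, pullEq] at hs ⊢
      rw [← map_smul]
      exact (congrArg i (Subtype.ext hs)).trans h.choose_spec
end

section
/- A pure subact of a weakly f-injective S-act is weakly f-injective. -/
universe u

open Cardinal

/-- a pure subact of a weakly f-injective act is weakly f-injective. -/
theorem pure_subact_weaklyFInjective {S A : Type u} [Monoid S] [MulAction S A]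
    (hA : IsWeaklyFInjective S A) (U : SubMulAction S A)
    (hU : IsPure S (U : Set A)) : IsWeaklyFInjective S U := by
  intro F h hh
  -- membership of each f ∈ F in the ideal
  have hmem : ∀ f ∈ F, f ∈ genIdeal (F : Set S) :=
    fun f hf => ⟨1, f, hf, (one_mul f).symm⟩
  -- push h into A and extend there
  have hA' : ∀ (s : S) (x : genIdeal (F : Set S)),
      (fun x => ((h x : U) : A)) ⟨s * ↑x, genIdeal_smul _ s x.2⟩
        = s • (fun x => ((h x : U) : A)) x := by
    intro s x
    simp only [hh s x, SubMulAction.val_smul]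
  obtain ⟨g, hg1, hg2⟩ := hA F (fun x => ((h x : U) : A)) hA'
  set a : A := g 1 with ha
  have hgs : ∀ s : S, g s = s • a := fun s => by
    calc g s = g (s * 1) := by rw [mul_one]
      _ = s • g 1 := hg1 s 1
  have hfa : ∀ f (hf : f ∈ F), f • a = ((h ⟨f, hmem f hf⟩ : U) : A) := by
    intro f hf
    rw [← hgs f, hg2 ⟨f, hmem f hf⟩]
  -- purity system: one unknown, equations f • x = h f
  set E : List (ActEq S A 1) :=
    F.attach.toList.map (fun f => ActEq.xra 0 f.1 ((h ⟨f.1, hmem f.1 f.2⟩ : U) : A))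
    with hE
  have hconst : ∀ e ∈ E, ConstIn (U : Set A) e := by
    intro e he
    rw [hE] at he
    obtain ⟨f, _, rfl⟩ := List.mem_map.mp he
    exact (h _).2
  have hsolv : ∃ v : Fin 1 → A, ∀ e ∈ E, SatEq v e := by
    refine ⟨fun _ => a, ?_⟩
    intro e he
    rw [hE] at he
    obtain ⟨f, _, rfl⟩ := List.mem_map.mp he
    exact hfa f.1 f.2
  obtain ⟨v, hvU, hv⟩ := hU 1 E hconst hsolv
  set u : U := ⟨v 0, hvU 0⟩ with hu
  have hfu : ∀ f (hf : f ∈ F), f • u = h ⟨f, hmem f hf⟩ := by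
    intro f hf
    have := hv (ActEq.xra 0 f ((h ⟨f, hmem f hf⟩ : U) : A))
      (by rw [hE]; exact List.mem_map.mpr ⟨⟨f, hf⟩, Finset.mem_toList.mpr (F.mem_attach _), rfl⟩)
    exact Subtype.ext this
  refine ⟨fun s => s • u, fun s t => mul_smul s t u, ?_⟩
  rintro ⟨x, s, f, hf, rfl⟩
  calc (s * f) • u = s • (f • u) := mul_smul s f u
    _ = s • h ⟨f, hmem f hf⟩ := by rw [hfu f hf]
    _ = h ⟨s * f, _⟩ := (hh s ⟨f, hmem f hf⟩).symm
end

section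
/- A pure subact of a weakly p-injective S-act is weakly p-injective. -/
universe u

open Cardinal

/-- a pure subact of a weakly p-injective act is weakly p-injective. -/
theorem pure_subact_weaklyPInjective {S A : Type u} [Monoid S] [MulAction S A]
    (hA : IsWeaklyPInjective S A) (U : SubMulAction S A)
    (hU : IsPure S (U : Set A)) : IsWeaklyPInjective S U := by
  intro t h hh
  have ht0 : t ∈ genIdeal ({t} : Set S) := ⟨1, t, rfl, (one_mul t).symm⟩
  set t₀ : genIdeal ({t} : Set S) := ⟨t, ht0⟩ with ht₀def
  -- extend the A-valued version using hA
  obtain ⟨g, hg1, hg2⟩ := hA t (fun x => (h x : A)) (by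
    intro s x
    have := hh s x
    simpa using congrArg (fun u : U => (u : A)) this)
  -- solvability in A of the equation t • x = h t₀
  have hsolA : ∃ v : Fin 1 → A, ∀ e ∈ [ActEq.xra (0 : Fin 1) t ((h t₀ : A))], SatEq v e := by
    refine ⟨fun _ => g 1, ?_⟩
    intro e he
    simp only [List.mem_singleton] at he
    subst he
    show t • g 1 = (h t₀ : A)
    have h1 : g (t * 1) = t • g 1 := hg1 t 1
    have h2 : g t = (h t₀ : A) := hg2 t₀
    rw [mul_one] at h1
    rw [← h1, h2]
  obtain ⟨v, hvU, hvsat⟩ := hU 1 [ActEq.xra (0 : Fin 1) t ((h t₀ : A))]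
    (by
      intro e he
      simp only [List.mem_singleton] at he
      subst he
      exact (h t₀).2) hsolA
  have hsat : t • v 0 = (h t₀ : A) := hvsat _ (List.mem_singleton_self _)
  set u : U := ⟨v 0, hvU 0⟩ with hudef
  have htu : t • u = h t₀ := Subtype.ext hsat
  refine ⟨fun s => s • u, ?_, ?_⟩
  · intro s t'
    exact mul_smul s t' u
  · intro x
    obtain ⟨s, f, hf, hx⟩ := x.2
    have hft : f = t := hf
    rw [hft] at hx
    have hxval : (x : S) = s * t := hx
    have hx2 : x = ⟨s * (t₀ : S), genIdeal_smul _ s t₀.2⟩ := Subtype.ext hxval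
    rw [hx2, hh s t₀]
    show (s * t) • u = s • h t₀
    rw [mul_smul, htu]
end

section
/- Every S-act has a preenvelope with respect to the class of weakly p-injective S-acts, and every such preenvelope is a monomorphism. -/
universe u

open Cardinal

/-! ### Auxiliary machinery -/

section Aux

variable {S : Type u} [Monoid S]

theorem mem_genIdeal_self (t : S) : t ∈ genIdeal ({t} : Set S) :=
  ⟨1, t, rfl, (one_mul t).symm⟩

/-- Map the constants of an equation along a function. -/
def ActEq.mapC {B B' : Type u} {n : ℕ} (g : B → B') : ActEq S B n → ActEq S B' n
  | .xrxs i r s => .xrxs i r s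
  | .xrys i j r s => .xrys i j r s
  | .xra i r a => .xra i r (g a)

/-- Pure subsets are closed under the action. -/
theorem IsPure.smul_mem {C : Type u} [MulAction S C] {U : Set C} (h : IsPure S U)
    {c : C} (hc : c ∈ U) (s : S) : s • c ∈ U := by
  obtain ⟨v, hvU, hv⟩ := h 2 [ActEq.xrys 0 1 1 s, ActEq.xra 1 1 c]
    (by
      intro e he
      simp only [List.mem_cons, List.not_mem_nil, or_false] at he
      rcases he with rfl | rfl
      · trivial
      · exact hc)
    ⟨![s • c, c], by
      intro e he
      simp only [List.mem_cons, List.not_mem_nil, or_false] at he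
      rcases he with rfl | rfl
      · show (1 : S) • s • c = s • c
        rw [one_smul]
      · show (1 : S) • c = c
        rw [one_smul]⟩
  have h1 : (1 : S) • v 0 = s • v 1 := hv (ActEq.xrys 0 1 1 s) (by simp)
  have h2 : (1 : S) • v 1 = c := hv (ActEq.xra 1 1 c) (by simp)
  rw [one_smul] at h1 h2
  rw [h2] at h1
  rw [← h1]
  exact hvU 0

/-- The action on a subset closed under the action. -/
def subAct {C : Type u} [MulAction S C] (U : Set C)
    (hU : ∀ (s : S), ∀ c ∈ U, s • c ∈ U) : MulAction S ↥U where
  smul s c := ⟨s • ↑c, hU s _ c.2⟩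
  one_smul c := Subtype.ext (one_smul S (c : C))
  mul_smul r s c := Subtype.ext (mul_smul r s (c : C))

/-- A pure subact of a weakly p-injective act is weakly p-injective. -/
theorem winj_subAct {C : Type u} [MulAction S C] (hC : IsWeaklyPInjective S C)
    {U : Set C} (hU : IsPure S U) :
    @IsWeaklyPInjective S _ ↥U (subAct U (fun s c hc => hU.smul_mem hc s)) := by
  letI instU := subAct U (fun s c hc => hU.smul_mem hc s)
  intro t h hequ
  set h' : genIdeal ({t} : Set S) → C := fun x => ↑(h x) with hh'
  have hequ' : ∀ (s : S) (x : genIdeal ({t} : Set S)),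
      h' ⟨s * ↑x, genIdeal_smul _ s x.2⟩ = s • h' x := by
    intro s x
    have := congrArg Subtype.val (hequ s x)
    exact this
  obtain ⟨g, hg1, hg2⟩ := hC t h' hequ'
  set tbar : genIdeal ({t} : Set S) := ⟨t, mem_genIdeal_self t⟩ with htbar
  have hkey : t • g 1 = ↑(h tbar) := by
    have h1 := hg1 t 1
    rw [mul_one] at h1
    rw [← h1]
    exact hg2 tbar
  obtain ⟨v, hvU, hv⟩ := hU 1 [ActEq.xra 0 t ↑(h tbar)]
    (by
      intro e he
      rw [List.mem_singleton] at he
      subst he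
      exact (h tbar).2)
    ⟨fun _ => g 1, by
      intro e he
      rw [List.mem_singleton] at he
      subst he
      exact hkey⟩
  have hveq : t • v 0 = ↑(h tbar) := hv (ActEq.xra 0 t ↑(h tbar)) (by simp)
  refine ⟨fun s => s • (⟨v 0, hvU 0⟩ : ↥U), fun s r => mul_smul s r _, ?_⟩
  rintro ⟨x, s, f, hf, rfl⟩
  have hft : f = t := hf
  subst hft
  refine Eq.trans ?_ (hequ s tbar).symm
  apply Subtype.ext
  show (s * f) • v 0 = s • (↑(h tbar) : C)
  rw [← hveq, mul_smul]

/-- The product action. -/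
def prodAct {ι : Type u} (P : ι → Type u) (m : ∀ i, MulAction S (P i)) :
    MulAction S (∀ i, P i) where
  smul s v := fun i => @SMul.smul _ _ (m i).toSMul s (v i)
  one_smul v := funext fun i => @one_smul S (P i) _ (m i) (v i)
  mul_smul r s v := funext fun i => (m i).mul_smul r s (v i)

/-- A product of weakly p-injective acts is weakly p-injective. -/
theorem winj_pi {ι : Type u} (P : ι → Type u) (m : ∀ i, MulAction S (P i))
    (hw : ∀ i, @IsWeaklyPInjective S _ (P i) (m i)) :
    @IsWeaklyPInjective S _ (∀ i, P i) (prodAct P m) := by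
  letI := prodAct P m
  intro t h hequ
  have hcomp : ∀ i : ι, ∃ g : S → P i,
      (∀ s t' : S, g (s * t') = @SMul.smul _ _ (m i).toSMul s (g t')) ∧
      ∀ x : genIdeal ({t} : Set S), g x = h x i := by
    intro i
    exact hw i t (fun x => h x i) (fun s x => congrFun (hequ s x) i)
  choose g hg1 hg2 using hcomp
  exact ⟨fun s i => g i s, fun s t' => funext fun i => hg1 i s t',
    fun x => funext fun i => hg2 i x⟩

/-- Transport a `MulAction` along a bijection. -/
def transportAct {C D : Type u} [MulAction S C] (e : C ≃ D) : MulAction S D where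
  smul s d := e (s • e.symm d)
  one_smul d := by
    show e ((1 : S) • e.symm d) = d
    rw [one_smul, Equiv.apply_symm_apply]
  mul_smul r s d := by
    show e ((r * s) • e.symm d) = e (r • e.symm (e (s • e.symm d)))
    rw [Equiv.symm_apply_apply, mul_smul]

/-- Weak p-injectivity transports along a bijection. -/
theorem winj_transport {C D : Type u} [MulAction S C] (e : C ≃ D)
    (hC : IsWeaklyPInjective S C) :
    @IsWeaklyPInjective S _ D (transportAct e) := by
  letI := transportAct (S := S) e
  intro t h hequ
  have hequ' : ∀ (s : S) (x : genIdeal ({t} : Set S)),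
      e.symm (h ⟨s * ↑x, genIdeal_smul _ s x.2⟩) = s • e.symm (h x) := by
    intro s x
    rw [hequ s x]
    show e.symm (e (s • e.symm (h x))) = _
    rw [Equiv.symm_apply_apply]
  obtain ⟨g, hg1, hg2⟩ := hC t (fun x => e.symm (h x)) hequ'
  refine ⟨fun s => e (g s), ?_, ?_⟩
  · intro s t'
    show e (g (s * t')) = e (s • e.symm (e (g t')))
    rw [hg1, Equiv.symm_apply_apply]
  · intro x
    show e (g ↑x) = h x
    rw [hg2 x]
    exact e.apply_symm_apply (h x)

/-- The cofree act on a type. -/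
def cofreeAct (S X : Type u) [Monoid S] : MulAction S (S → X) where
  smul s f := fun t => f (t * s)
  one_smul f := funext fun t => by
    show f (t * 1) = f t
    rw [mul_one]
  mul_smul r s f := funext fun t => by
    show f (t * (r * s)) = f (t * r * s)
    rw [mul_assoc]

open Classical in
theorem winj_cofree (A : Type u) :
    @IsWeaklyPInjective S _ (S → Option A) (cofreeAct S (Option A)) := by
  letI := cofreeAct S (Option A)
  intro t h hequ
  refine ⟨fun s => s •
      (fun w => if hw : w ∈ genIdeal ({t} : Set S) then h ⟨w, hw⟩ 1 else none),
    fun s r => mul_smul s r _, ?_⟩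
  intro x
  funext u
  show (if hw : (u * ↑x) ∈ genIdeal ({t} : Set S) then h ⟨u * ↑x, hw⟩ 1 else none) = h x u
  rw [dif_pos (genIdeal_smul _ u x.2)]
  rw [hequ u x]
  show h x (1 * u) = h x u
  rw [one_mul]

end Aux

section Envelope

variable (S : Type u) [Monoid S] (A : Type u) [MulAction S A]

open Classical in
/-- Terms naming elements generated over `A` by chosen solutions of finite systems. -/
inductive Tm : Type u
  | base : A → Tm
  | sol (n m : ℕ) (E : List (ActEq S (ULift.{u} (Fin m)) n)) (c : Fin m → Tm)
      (i : Fin n) : Tm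

variable {S A}

open Classical in
noncomputable def evalTm {C : Type u} [MulAction S C] (f : A → C) (junk : C) :
    Tm S A → C
  | .base a => f a
  | .sol n m E c i =>
      if h : ∃ v : Fin n → C,
          ∀ e ∈ E.map (ActEq.mapC (fun k : ULift.{u} (Fin m) => evalTm f junk (c k.down))),
            SatEq v e
      then h.choose i else junk

open Classical in
theorem isPure_range_evalTm {C : Type u} [MulAction S C] (f : A → C) (junk : C) :
    IsPure S (Set.range (evalTm (S := S) f junk)) := by
  intro n E hconst hsolv
  set m := E.length with hm
  let cgen : Fin m → Tm S A := fun k =>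
    match E.get k with
    | .xra _ _ a => if h : ∃ τ, evalTm f junk τ = a then h.choose
        else Tm.sol 1 0 [] Fin.elim0 0
    | _ => Tm.sol 1 0 [] Fin.elim0 0
  let E' : List (ActEq S (ULift.{u} (Fin m)) n) :=
    List.ofFn (fun k => (E.get k).mapC (fun _ => ULift.up k))
  have hL : E'.map (ActEq.mapC (fun l : ULift.{u} (Fin m) => evalTm f junk (cgen l.down))) = E := by
    have hpt : ∀ k : Fin m,
        ((E.get k).mapC (fun _ : C => ULift.up.{u} k)).mapC
          (fun l : ULift.{u} (Fin m) => evalTm f junk (cgen l.down)) = E.get k := by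
      intro k
      have hc := hconst (E.get k) (E.get_mem _)
      cases hE : E.get k with
      | xrxs i r s => simp [ActEq.mapC]
      | xrys i j r s => simp [ActEq.mapC]
      | xra i r a =>
        rw [hE] at hc
        have hmem : ∃ τ, evalTm f junk τ = a := hc
        have hck : evalTm f junk (cgen k) = a := by
          have hcg : cgen k = hmem.choose := by
            simp only [cgen, hE]
            rw [dif_pos hmem]
          rw [hcg, hmem.choose_spec]
        simp [ActEq.mapC, hck]
    simp only [E', List.map_ofFn]
    calc List.ofFn _ = List.ofFn (fun k : Fin m => E.get k) := by
          refine congrArg List.ofFn ?_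
          funext k
          exact hpt k
      _ = E := List.ofFn_get E
  have hsolv' : ∃ v : Fin n → C,
      ∀ e ∈ E'.map (ActEq.mapC (fun l : ULift.{u} (Fin m) => evalTm f junk (cgen l.down))),
        SatEq v e := by rw [hL]; exact hsolv
  have hkey : ∀ i : Fin n, evalTm f junk (Tm.sol n m E' cgen i) = hsolv'.choose i := by
    intro i
    show dite _ _ _ = _
    rw [dif_pos hsolv']
  refine ⟨hsolv'.choose, ?_, ?_⟩
  · intro i
    rw [← hkey i]
    exact Set.mem_range_self _
  · intro e he
    exact hsolv'.choose_spec e (by rw [hL]; exact he)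

variable (S A) [MulAction S A]

/-- The index of "small" weakly p-injective acts receiving a map from `A`. -/
structure Idx : Type u where
  P : Set (Tm S A)
  act : MulAction S ↥P
  winj : @IsWeaklyPInjective S _ ↥P act
  hom : A → ↥P
  heq : ∀ (s : S) (a : A), hom (s • a) = @SMul.smul _ _ act.toSMul s (hom a)

/-- The candidate preenvelope of `A`. -/
def BigC : Type u := ∀ i : Idx S A, ↥i.P

noncomputable instance bigAct : MulAction S (BigC S A) := prodAct _ (fun i => i.act)

theorem bigC_winj : IsWeaklyPInjective S (BigC S A) :=
  winj_pi _ _ (fun i => i.winj)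

noncomputable def bigφ : A →[S] (BigC S A) where
  toFun a := fun i => i.hom a
  map_smul' s a := funext fun i => i.heq s a

/-- Every map from `A` to a weakly p-injective act factors through `BigC`. -/
theorem bigC_factor (C' : Type u) [MulAction S C'] (hC' : IsWeaklyPInjective S C')
    (f : A →[S] C') :
    ∃ g : (BigC S A) →[S] C', ∀ a, g ((bigφ S A) a) = f a := by
  -- find a pure subact U of C' containing the range of f,
  -- together with an injection of U into Tm S A
  obtain ⟨U, hpure, hrange, j, hj⟩ :
      ∃ U : Set C', IsPure S U ∧ (∀ a : A, f a ∈ U) ∧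
        ∃ j : ↥U → Tm S A, Function.Injective j := by
    by_cases hne : Nonempty C'
    · obtain ⟨junk⟩ := hne
      refine ⟨Set.range (evalTm (S := S) (fun a => f a) junk),
        isPure_range_evalTm _ _, fun a => ⟨Tm.base a, rfl⟩, ?_⟩
      refine ⟨fun u => u.2.choose, ?_⟩
      intro u u' huu
      apply Subtype.ext
      rw [← u.2.choose_spec, ← u'.2.choose_spec]
      exact congrArg (evalTm (fun a => f a) junk) huu
    · refine ⟨∅, ?_, fun a => absurd ⟨f a⟩ hne, fun u => absurd ⟨(u : C')⟩ hne,
        fun u => absurd ⟨(u : C')⟩ hne⟩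
      intro n E hconst hsolv
      obtain ⟨v, hv⟩ := hsolv
      exact ⟨v, fun i => absurd ⟨v i⟩ hne, hv⟩
  have hUc : ∀ (s : S), ∀ c ∈ U, s • c ∈ U := fun s c hc => hpure.smul_mem hc s
  letI actU : MulAction S ↥U := subAct U hUc
  have winjU : @IsWeaklyPInjective S _ ↥U actU := winj_subAct hC' hpure
  let e : ↥U ≃ ↥(Set.range j) := Equiv.ofInjective j hj
  letI actP : MulAction S ↥(Set.range j) := @transportAct S _ ↥U ↥(Set.range j) actU e
  have winjP : @IsWeaklyPInjective S _ ↥(Set.range j) actP :=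
    @winj_transport S _ ↥U ↥(Set.range j) actU e winjU
  let i₀ : Idx S A :=
    { P := Set.range j
      act := actP
      winj := winjP
      hom := fun a => e ⟨f a, hrange a⟩
      heq := fun s a => by
        show e ⟨f (s • a), _⟩ = e (s • e.symm (e ⟨f a, hrange a⟩))
        rw [Equiv.symm_apply_apply]
        refine congrArg e (Subtype.ext ?_)
        show f (s • a) = s • f a
        exact f.map_smul s a }
  refine ⟨⟨fun v => ↑(e.symm (v i₀)), ?_⟩, ?_⟩
  · intro s v
    show (↑(e.symm (e (s • e.symm (v i₀)))) : C') = s • (↑(e.symm (v i₀)) : C')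
    rw [Equiv.symm_apply_apply]
    rfl
  · intro a
    show (↑(e.symm (e ⟨f a, hrange a⟩)) : C') = f a
    rw [Equiv.symm_apply_apply]

end Envelope

/-- every act has a preenvelope with respect to the class of weakly
p-injective acts, and every such preenvelope is a monomorphism. -/
theorem weaklyPInjective_preenveloping {S : Type u} [Monoid S]
    (A : Type u) [MulAction S A] :
    HasPreenvelope (fun C [MulAction S C] => IsWeaklyPInjective S C) A ∧
    ∀ (C : Type u) [MulAction S C] (φ : A →[S] C),
      IsPreenvelope (fun C [MulAction S C] => IsWeaklyPInjective S C) A C φ →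
      Function.Injective φ := by
  constructor
  · exact ⟨BigC S A, bigAct S A, bigφ S A, bigC_winj S A,
      fun C' _ hC' f => bigC_factor S A C' hC' f⟩
  · intro C _ φ hφ
    obtain ⟨hCw, hfac⟩ := hφ
    letI := cofreeAct S (Option A)
    letI : SMul S (S → Option A) := (cofreeAct S (Option A)).toSMul
    let η : @MulActionHom S S id A inferInstance (S → Option A)
        (cofreeAct S (Option A)).toSMul :=
      { toFun := fun a u => some (u • a)
        map_smul' := fun s a => funext fun u => by
          show some (u • s • a) = some ((u * s) • a)
          rw [mul_smul] }
    obtain ⟨g, hg⟩ := hfac (S → Option A) (winj_cofree A) η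
    intro a a' haa
    have h1 : η a = η a' := by rw [← hg a, ← hg a', haa]
    have h2 := congrFun h1 1
    have h3 : some ((1 : S) • a) = some ((1 : S) • a') := h2
    rw [one_smul, one_smul] at h3
    exact Option.some_injective _ h3
end

section
/- Let S be a monoid, C an S-act, and f : A → C a homomorphism of S-acts. Then there exists a pure subact U of C with f(A) ⊆ U and |U| ≤ max{ℵ₀, |S|, |A|}; in particular f factors as A → U → C. -/
universe u

open Cardinal

namespace PureFactorAux

open Cardinal

variable {S C : Type u} [Monoid S] [MulAction S C]

/-- Solvability of a system in `C`. -/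
def Solvable (n : ℕ) (E : List (ActEq S C n)) : Prop :=
  ∃ v : Fin n → C, ∀ e ∈ E, SatEq v e

noncomputable def sol {n : ℕ} {E : List (ActEq S C n)} (h : Solvable n E) : Fin n → C :=
  h.choose

lemma sol_spec {n : ℕ} {E : List (ActEq S C n)} (h : Solvable n E) :
    ∀ e ∈ E, SatEq (sol h) e := h.choose_spec

/-- The solvable systems with constants in `U`. -/
def T (U : Set C) : Type u :=
  {p : Σ n : ℕ, List (ActEq S C n) // Solvable p.1 p.2 ∧ ∀ e ∈ p.2, ConstIn U e}

/-- One step: add (the `S`-orbits of) solutions of all solvable systems with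
constants in `U`. -/
noncomputable def step (U : Set C) : Set C :=
  U ∪ ⋃ p : T (S := S) U, Set.range (fun q : S × Fin p.1.1 => q.1 • sol p.2.1 q.2)

lemma subset_step (U : Set C) : U ⊆ step (S := S) U := Set.subset_union_left

lemma sol_mem_step {U : Set C} {n : ℕ} {E : List (ActEq S C n)} (hs : Solvable n E)
    (hc : ∀ e ∈ E, ConstIn U e) (s : S) (i : Fin n) :
    s • sol hs i ∈ step (S := S) U :=
  Or.inr (Set.mem_iUnion.2 ⟨⟨⟨n, E⟩, hs, hc⟩, ⟨(s, i), rfl⟩⟩)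

lemma step_closed {U : Set C} (hU : ∀ (s : S) c, c ∈ U → s • c ∈ U) :
    ∀ (s : S) c, c ∈ step (S := S) U → s • c ∈ step (S := S) U := by
  rintro s c (hc | hc)
  · exact Or.inl (hU s c hc)
  · obtain ⟨p, ⟨q, rfl⟩⟩ := Set.mem_iUnion.1 hc
    refine Or.inr (Set.mem_iUnion.2 ⟨p, ⟨(s * q.1, q.2), ?_⟩⟩)
    simp [mul_smul]

noncomputable def chain (B : Set C) : ℕ → Set C
  | 0 => B
  | n + 1 => step (S := S) (chain B n)

lemma chain_mono (B : Set C) : Monotone (chain (S := S) B) :=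
  monotone_nat_of_le_succ fun n => subset_step _

lemma chain_closed {B : Set C} (hB : ∀ (s : S) c, c ∈ B → s • c ∈ B) :
    ∀ n, ∀ (s : S) c, c ∈ chain (S := S) B n → s • c ∈ chain (S := S) B n
  | 0 => hB
  | n + 1 => step_closed (chain_closed hB n)

noncomputable def lim (B : Set C) : Set C := ⋃ k : ULift.{u} ℕ, chain (S := S) B k.down

lemma chain_subset_lim (B : Set C) (n : ℕ) : chain (S := S) B n ⊆ lim (S := S) B :=
  Set.subset_iUnion (fun k : ULift.{u} ℕ => chain (S := S) B k.down) ⟨n⟩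

lemma lim_closed {B : Set C} (hB : ∀ (s : S) c, c ∈ B → s • c ∈ B) :
    ∀ (s : S) c, c ∈ lim (S := S) B → s • c ∈ lim (S := S) B := by
  intro s c hc
  obtain ⟨k, hk⟩ := Set.mem_iUnion.1 hc
  exact chain_subset_lim B k.down (chain_closed hB k.down s c hk)

lemma constIn_mono {U V : Set C} (h : U ⊆ V) {n : ℕ} {e : ActEq S C n} :
    ConstIn U e → ConstIn V e := by
  cases e with
  | xra i r a => exact fun ha => h ha
  | xrxs i r s => exact fun _ => trivial
  | xrys i j r s => exact fun _ => trivial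

lemma exists_stage {B : Set C} {n : ℕ} (E : List (ActEq S C n))
    (h : ∀ e ∈ E, ConstIn (lim (S := S) B) e) :
    ∃ N, ∀ e ∈ E, ConstIn (chain (S := S) B N) e := by
  induction E with
  | nil => exact ⟨0, by simp⟩
  | cons e E ih =>
    obtain ⟨N₁, hN₁⟩ := ih (fun e' he' => h e' (List.mem_cons_of_mem _ he'))
    have he : ConstIn (lim (S := S) B) e := h e List.mem_cons_self
    obtain ⟨N₂, hN₂⟩ : ∃ N₂, ConstIn (chain (S := S) B N₂) e := by
      cases e with
      | xra i r a =>
        obtain ⟨k, hk⟩ := Set.mem_iUnion.1 he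
        exact ⟨k.down, hk⟩
      | xrxs i r s => exact ⟨0, trivial⟩
      | xrys i j r s => exact ⟨0, trivial⟩
    refine ⟨max N₁ N₂, fun e' he' => ?_⟩
    rcases List.mem_cons.1 he' with rfl | he'
    · exact constIn_mono (chain_mono B (le_max_right N₁ N₂)) hN₂
    · exact constIn_mono (chain_mono B (le_max_left N₁ N₂)) (hN₁ e' he')

lemma isPure_lim (B : Set C) : IsPure S (lim (S := S) B) := by
  intro n E hconst hsolv
  obtain ⟨N, hN⟩ := exists_stage E hconst
  refine ⟨sol hsolv, fun i => ?_, sol_spec hsolv⟩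
  have := sol_mem_step hsolv hN 1 i
  rw [one_smul] at this
  exact chain_subset_lim B (N + 1) this

/-! ### Cardinality bounds -/

lemma mul_le_k {a b k : Cardinal.{u}} (hk : ℵ₀ ≤ k) (ha : a ≤ k) (hb : b ≤ k) :
    a * b ≤ k :=
  (mul_le_mul' ha hb).trans_eq (Cardinal.mul_eq_self hk)

lemma add_le_k {a b k : Cardinal.{u}} (hk : ℵ₀ ≤ k) (ha : a ≤ k) (hb : b ≤ k) :
    a + b ≤ k :=
  (add_le_add ha hb).trans_eq (Cardinal.add_eq_self hk)

/-- Codes for equations with constants in `U`. -/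
abbrev Code (U : Set C) : Type u :=
  (ULift.{u} ℕ × S × S) ⊕ (ULift.{u} ℕ × ULift.{u} ℕ × S × S) ⊕ (ULift.{u} ℕ × S × ↥U)

def enc {U : Set C} : ∀ {n : ℕ} (e : ActEq S C n), ConstIn U e → Code (S := S) U
  | _, .xrxs i r s, _ => .inl (⟨i.val⟩, r, s)
  | _, .xrys i j r s, _ => .inr (.inl (⟨i.val⟩, ⟨j.val⟩, r, s))
  | _, .xra i r a, h => .inr (.inr (⟨i.val⟩, r, ⟨a, h⟩))

lemma enc_inj {U : Set C} {n : ℕ} {e e' : ActEq S C n} {h : ConstIn U e}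
    {h' : ConstIn U e'} (heq : enc e h = enc e' h') : e = e' := by
  cases e <;> cases e' <;> simp_all [enc, Fin.val_inj, ULift.ext_iff] <;> exact congrArg Subtype.val heq.2.2

lemma pmap_inj {α β : Type*} {P : α → Prop} (f : ∀ a, P a → β)
    (hf : ∀ a b ha hb, f a ha = f b hb → a = b) :
    ∀ (l l' : List α) (h : ∀ a ∈ l, P a) (h' : ∀ a ∈ l', P a),
      l.pmap f h = l'.pmap f h' → l = l' := by
  intro l
  induction l with
  | nil => intro l' h h' heq; cases l' <;> simp_all [List.pmap]
  | cons a l ih =>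
    intro l' h h' heq
    cases l' with
    | nil => simp [List.pmap] at heq
    | cons b l'' =>
      simp only [List.pmap, List.cons.injEq] at heq
      rw [hf _ _ _ _ heq.1, ih l'' _ _ heq.2]

lemma mk_T_le (U : Set C) : #(T (S := S) U) ≤ max (max ℵ₀ #S) #U := by
  set k := max (max ℵ₀ #S) #U with hk
  have hℵ : ℵ₀ ≤ k := le_max_of_le_left (le_max_left _ _)
  have hS : #S ≤ k := le_max_of_le_left (le_max_right _ _)
  have hU : #↥U ≤ k := le_max_right _ _
  have hN : #(ULift.{u} ℕ) = ℵ₀ := by simp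
  have hCode : #(Code (S := S) U) ≤ k := by
    have h1 : #(ULift.{u} ℕ × S × S) ≤ k := by
      rw [Cardinal.mk_prod, Cardinal.mk_prod]
      simp only [Cardinal.lift_id, hN]
      exact mul_le_k hℵ hℵ (mul_le_k hℵ hS hS)
    have h2 : #(ULift.{u} ℕ × ULift.{u} ℕ × S × S) ≤ k := by
      rw [Cardinal.mk_prod]
      simp only [Cardinal.lift_id, hN]
      exact mul_le_k hℵ hℵ h1
    have h3 : #(ULift.{u} ℕ × S × ↥U) ≤ k := by
      rw [Cardinal.mk_prod, Cardinal.mk_prod]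
      simp only [Cardinal.lift_id, hN]
      exact mul_le_k hℵ hℵ (mul_le_k hℵ hS hU)
    show #((ULift.{u} ℕ × S × S) ⊕ ((ULift.{u} ℕ × ULift.{u} ℕ × S × S) ⊕ (ULift.{u} ℕ × S × ↥U))) ≤ k
    rw [Cardinal.mk_sum, Cardinal.mk_sum]
    simp only [Cardinal.lift_id]
    exact add_le_k hℵ h1 (add_le_k hℵ h2 h3)
  have hList : #(List (Code (S := S) U)) ≤ k :=
    (Cardinal.mk_list_le_max _).trans (max_le hℵ hCode)
  have hF : Function.Injective
      (fun p : T (S := S) U =>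
        ((⟨p.1.1⟩ : ULift.{u} ℕ), p.1.2.pmap (fun e h => enc e h) p.2.2)) := by
    rintro ⟨⟨n, E⟩, hp⟩ ⟨⟨n', E'⟩, hp'⟩ heq
    rw [Prod.ext_iff] at heq
    obtain ⟨h1, heq2⟩ := heq
    have hnn : n = n' := congrArg ULift.down h1
    subst hnn
    have : E = E' := pmap_inj _ (fun a b ha hb hab => enc_inj hab) E E' _ _ heq2
    subst this
    rfl
  calc #(T (S := S) U) ≤ #(ULift.{u} ℕ × List (Code (S := S) U)) :=
        Cardinal.mk_le_of_injective hF
    _ ≤ k := by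
        rw [Cardinal.mk_prod]
        simp only [Cardinal.lift_id, hN]
        exact mul_le_k hℵ hℵ hList

lemma mk_step_le (U : Set C) : #(step (S := S) U) ≤ max (max ℵ₀ #S) #U := by
  set k := max (max ℵ₀ #S) #U with hk
  have hℵ : ℵ₀ ≤ k := le_max_of_le_left (le_max_left _ _)
  have hS : #S ≤ k := le_max_of_le_left (le_max_right _ _)
  have hU : #↥U ≤ k := le_max_right _ _
  have hrange : ∀ p : T (S := S) U,
      #↥(Set.range (fun q : S × Fin p.1.1 => q.1 • sol p.2.1 q.2)) ≤ k := by
    intro p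
    refine (Cardinal.mk_range_le).trans ?_
    have hinj : Function.Injective
        (fun q : S × Fin p.1.1 => ((q.1, (⟨q.2.val⟩ : ULift.{u} ℕ)) : S × ULift.{u} ℕ)) := by
      rintro ⟨s, i⟩ ⟨s', i'⟩ h
      simp only [Prod.mk.injEq, ULift.ext_iff, Fin.val_inj] at h
      exact Prod.ext h.1 h.2
    refine (Cardinal.mk_le_of_injective hinj).trans ?_
    rw [Cardinal.mk_prod]
    simp only [Cardinal.lift_id]
    have : #(ULift.{u} ℕ) = ℵ₀ := by simp
    rw [this]
    exact mul_le_k hℵ hS hℵ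
  have hY : #↥(⋃ p : T (S := S) U,
      Set.range (fun q : S × Fin p.1.1 => q.1 • sol p.2.1 q.2)) ≤ k := by
    refine (Cardinal.mk_iUnion_le_sum_mk).trans ?_
    refine (Cardinal.sum_le_sum _ (fun _ => k) hrange).trans ?_
    rw [Cardinal.sum_const']
    exact mul_le_k hℵ (mk_T_le U) le_rfl
  refine (Cardinal.mk_union_le _ _).trans (add_le_k hℵ (le_max_right _ _) hY)

lemma mk_chain_le (B : Set C) (n : ℕ) :
    #↥(chain (S := S) B n) ≤ max (max ℵ₀ #S) #↥B := by
  induction n with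
  | zero => exact le_max_right _ _
  | succ n ih =>
    refine (mk_step_le (chain (S := S) B n)).trans ?_
    exact max_le (le_max_left _ _) ih

lemma mk_lim_le (B : Set C) : #↥(lim (S := S) B) ≤ max (max ℵ₀ #S) #↥B := by
  set k := max (max ℵ₀ #S) #↥B with hk
  have hℵ : ℵ₀ ≤ k := le_max_of_le_left (le_max_left _ _)
  refine (Cardinal.mk_iUnion_le_sum_mk).trans ?_
  refine (Cardinal.sum_le_sum _ (fun _ => k) (fun i : ULift.{u} ℕ => mk_chain_le B i.down)).trans ?_
  rw [Cardinal.sum_const']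
  refine mul_le_k hℵ ?_ le_rfl
  simpa using hℵ

end PureFactorAux

/-- any map `f : A → C` factors through a pure subact `U` of `C` with
`|U| ≤ max {ℵ₀, |S|, |A|}`. -/
theorem factor_through_pure {S A C : Type u} [Monoid S] [MulAction S A] [MulAction S C]
    (f : A →[S] C) :
    ∃ U : SubMulAction S C, IsPure S (U : Set C) ∧ Set.range f ⊆ (U : Set C) ∧
      #U ≤ max (max ℵ₀ #S) #A ∧
      ∃ g : A → U, ∀ a, (g a : C) = f a := by
  classical
  open PureFactorAux in
  set B : Set C := Set.range (fun q : S × A => q.1 • f q.2) with hB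
  have hBclosed : ∀ (s : S) c, c ∈ B → s • c ∈ B := by
    rintro s c ⟨⟨t, a⟩, rfl⟩
    exact ⟨(s * t, a), by simp [mul_smul]⟩
  have hrangeB : Set.range f ⊆ B := by
    rintro c ⟨a, rfl⟩
    exact ⟨(1, a), by simp⟩
  refine ⟨⟨lim (S := S) B, fun {s} {c} hc => lim_closed hBclosed s c hc⟩,
    isPure_lim B, ?_, ?_, ?_⟩
  · exact fun c hc => chain_subset_lim B 0 (hrangeB hc)
  · refine (mk_lim_le B).trans ?_
    have hA : #↥B ≤ max (max ℵ₀ #S) #A := by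
      refine (Cardinal.mk_range_le).trans ?_
      rw [Cardinal.mk_prod]
      simp only [Cardinal.lift_id]
      exact mul_le_k (le_max_of_le_left (le_max_left _ _))
        (le_max_of_le_left (le_max_right _ _)) (le_max_right _ _)
    exact max_le (le_max_of_le_left le_rfl) hA
  · exact ⟨fun a => ⟨f a, chain_subset_lim B 0 (hrangeB ⟨a, rfl⟩)⟩, fun a => rfl⟩
end

section
/- Let 𝒞 be a class of S-acts and A an S-act. Suppose there is a set 𝔅 of S-acts in 𝒞 such that every homomorphism f : A → C with C ∈ 𝒞 factors as A → B → C for some B ∈ 𝔅, and suppose 𝒞 is closed under direct products indexed by any set. Then the canonical map from A into the product, over all pairs (B, g) with B ∈ 𝔅 and g : A → B a homomorphism, of the acts B, is a 𝒞-preenvelope of A. -/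
universe u

open Cardinal

/-- the canonical map into the product over all pairs `(B, g)` with
`B ∈ 𝔅` and `g : A → B` is a `𝒞`-preenvelope. -/
theorem canonical_map_preenvelope {S : Type u} [Monoid S]
    (𝒞 : (C : Type u) → [MulAction S C] → Prop)
    (A : Type u) [MulAction S A]
    (ι : Type u) (Bf : ι → Type u) [∀ i, MulAction S (Bf i)]
    (hB : ∀ i, 𝒞 (Bf i))
    (hfac : ∀ (C : Type u) [MulAction S C], 𝒞 C → ∀ f : A →[S] C,
      ∃ (i : ι) (g : A →[S] Bf i) (h : Bf i →[S] C), ∀ a, h (g a) = f a)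
    (hprod : ∀ (κ : Type u) (C : κ → Type u) [∀ k, MulAction S (C k)],
      (∀ k, 𝒞 (C k)) → 𝒞 ((k : κ) → C k)) :
    IsPreenvelope 𝒞 A ((p : (i : ι) × (A →[S] Bf i)) → Bf p.1)
      ⟨fun a p => p.2 a, by intro s a; funext p; exact map_smul p.2 s a⟩ := by
  constructor
  · exact hprod _ _ (fun p => hB p.1)
  · intro C' _ hC' f
    obtain ⟨i, g, h, hfg⟩ := hfac C' hC' f
    refine ⟨⟨fun v => h (v ⟨i, g⟩), ?_⟩, ?_⟩
    · intro s v; exact map_smul h s _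
    · intro a; exact hfg a
end
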